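/- arXiv:1204.2843 — 6 statements merged into one kernel-verified Lean document; each statement's English description precedes it below -/
import Mathlib

section
/- Let G be a subgroup of Aut(X*) containing a spherically transitive element, and define Y_n : G_∞ → ℕ by Y_n(g) = #{v ∈ X^n : π_n(g)(v) = v}. Then the fixed-point process (Y_n)_{n≥1} is a martingale on (G_∞, μ): for every n ≥ 2 and all non-negative integers t_1, …, t_{n−1} with μ(Y_1 = t_1, …, Y_{n−1} = t_{n−1}) > 0, the conditional expectation E(Y_n | Y_1 = t_1, …, Y_{n−1} = t_{n−1}) equals t_{n−1}. -/
/-- The automorphism group of the rooted `d`-ary tree `X*` (words over `Fin d`),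
realized as the subgroup of permutations of `List (Fin d)` preserving word length
and the prefix relation. -/
def treeAutGroup (d : ℕ) : Subgroup (Equiv.Perm (List (Fin d))) where
  carrier := {g | (∀ v, (g v).length = v.length) ∧ ∀ v w, v <+: w ↔ g v <+: g w}
  one_mem' := ⟨fun _ => rfl, fun _ _ => Iff.rfl⟩
  mul_mem' := by
    rintro a b ⟨ha1, ha2⟩ ⟨hb1, hb2⟩
    refine ⟨fun v => ?_, fun v w => ?_⟩
    · simpa [Equiv.Perm.mul_apply] using (ha1 (b v)).trans (hb1 v)
    · simpa [Equiv.Perm.mul_apply] using (hb2 v w).trans (ha2 (b v) (b w))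
  inv_mem' := by
    rintro g ⟨h1, h2⟩
    refine ⟨fun v => ?_, fun v w => ?_⟩
    · conv_rhs => rw [← (show g (g⁻¹ v) = v from Equiv.apply_symm_apply g v)]
      exact (h1 _).symm
    · have := (h2 (g⁻¹ v) (g⁻¹ w)).symm
      simpa [Equiv.apply_symm_apply] using this

/-- An automorphism of the rooted `d`-ary tree. -/
abbrev TreeAut (d : ℕ) : Type := ↥(treeAutGroup d)

namespace TreeAut

variable {d : ℕ}

theorem length_apply (g : TreeAut d) (v : List (Fin d)) :
    ((g : Equiv.Perm (List (Fin d))) v).length = v.length := g.2.1 v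

theorem prefix_iff (g : TreeAut d) (v w : List (Fin d)) :
    v <+: w ↔ (g : Equiv.Perm (List (Fin d))) v <+: (g : Equiv.Perm (List (Fin d))) w :=
  g.2.2 v w

theorem apply_append (g : TreeAut d) (v w : List (Fin d)) :
    (g : Equiv.Perm (List (Fin d))) (v ++ w) =
      (g : Equiv.Perm (List (Fin d))) v ++
        (((g : Equiv.Perm (List (Fin d))) (v ++ w)).drop v.length) := by
  obtain ⟨t, ht⟩ := (g.prefix_iff v (v ++ w)).mp ⟨w, rfl⟩
  rw [← ht, List.drop_left' (g.length_apply v)]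

/-- The restriction of a tree automorphism at the vertex `v`, as a permutation of words:
the unique map with `g (v ++ w) = g v ++ (restrictPerm g v) w`. -/
def restrictPerm (g : TreeAut d) (v : List (Fin d)) : Equiv.Perm (List (Fin d)) where
  toFun w := (((g : Equiv.Perm (List (Fin d)))) (v ++ w)).drop v.length
  invFun w := (((g : Equiv.Perm (List (Fin d))).symm)
      (((g : Equiv.Perm (List (Fin d))) v) ++ w)).drop v.length
  left_inv w := by
    dsimp only
    have h := (g.apply_append v w).symm
    rw [h, Equiv.symm_apply_apply, List.drop_left]
  right_inv w := by
    dsimp only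
    have hpre : v <+: (g : Equiv.Perm (List (Fin d))).symm
        ((g : Equiv.Perm (List (Fin d))) v ++ w) := by
      have := (g.prefix_iff v ((g : Equiv.Perm (List (Fin d))).symm
        ((g : Equiv.Perm (List (Fin d))) v ++ w))).symm
      rw [Equiv.apply_symm_apply] at this
      exact this.mp ⟨w, rfl⟩
    obtain ⟨u, hu⟩ := hpre
    rw [← hu, List.drop_left]
    have h2 : (g : Equiv.Perm (List (Fin d))) (v ++ u) =
        (g : Equiv.Perm (List (Fin d))) v ++ w := by rw [hu, Equiv.apply_symm_apply]
    rw [h2, List.drop_left' (g.length_apply v)]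

theorem restrictPerm_mem (g : TreeAut d) (v : List (Fin d)) :
    restrictPerm g v ∈ treeAutGroup d := by
  constructor
  · intro w
    show (((g : Equiv.Perm (List (Fin d))) (v ++ w)).drop v.length).length = w.length
    rw [List.length_drop, g.length_apply, List.length_append]
    omega
  · intro w w'
    show w <+: w' ↔
      ((g : Equiv.Perm (List (Fin d))) (v ++ w)).drop v.length <+:
        ((g : Equiv.Perm (List (Fin d))) (v ++ w')).drop v.length
    calc w <+: w' ↔ v ++ w <+: v ++ w' := (List.prefix_append_right_inj v).symm
      _ ↔ (g : Equiv.Perm (List (Fin d))) (v ++ w) <+: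
            (g : Equiv.Perm (List (Fin d))) (v ++ w') := g.prefix_iff _ _
      _ ↔ _ := by
            conv_lhs => rw [g.apply_append v w, g.apply_append v w']
            exact List.prefix_append_right_inj _

/-- The restriction `g|_v` of a tree automorphism `g` at a vertex `v`, as a tree
automorphism: the unique automorphism with `g (v ++ w) = g v ++ g|_v w` for all `w`. -/
def restrict (g : TreeAut d) (v : List (Fin d)) : TreeAut d :=
  ⟨restrictPerm g v, restrictPerm_mem g v⟩

/-- `g` fixes the end (infinite word) `w` of the tree: it fixes every finite initial
segment of `w`. -/
def FixesEnd (g : TreeAut d) (w : ℕ → Fin d) : Prop :=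
  ∀ n : ℕ, (g : Equiv.Perm (List (Fin d))) ((List.range n).map w) = (List.range n).map w

end TreeAut

/-- `g` is spherically transitive: the cyclic group it generates acts transitively on
the words of length `n`, for every `n ≥ 1`. -/
def SphericallyTransitive {d : ℕ} (g : TreeAut d) : Prop :=
  ∀ n : ℕ, 1 ≤ n → ∀ v w : List (Fin d), v.length = n → w.length = n →
    ∃ k : ℤ, ((g ^ k : TreeAut d) : Equiv.Perm (List (Fin d))) v = w

/-- The `n`-th level of the tree: words of length `n`. -/
abbrev Level (d n : ℕ) : Type := {v : List (Fin d) // v.length = n}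

instance Level.finite (d n : ℕ) : Finite (Level d n) := by
  have key : ∀ v : Level d n,
      v.1 = List.ofFn (fun i : Fin n => v.1.get (Fin.cast v.2.symm i)) := by
    intro v
    refine List.ext_get (by simp [v.2]) ?_
    intro i h1 h2
    simp [List.get_ofFn, Fin.cast]
  refine Finite.of_injective
    (fun v : Level d n => fun i : Fin n => v.1.get (Fin.cast v.2.symm i)) ?_
  intro v w h
  have h' : (fun i : Fin n => v.1.get (Fin.cast v.2.symm i)) =
      (fun i : Fin n => w.1.get (Fin.cast w.2.symm i)) := h
  refine Subtype.ext ?_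
  rw [key v, key w, h']

/-- The action of a tree automorphism on the `n`-th level of the tree. -/
def levelHom (d n : ℕ) : TreeAut d →* Equiv.Perm (Level d n) where
  toFun g :=
    { toFun := fun v => ⟨(g : Equiv.Perm (List (Fin d))) v.1, by rw [g.2.1, v.2]⟩
      invFun := fun v => ⟨((g⁻¹ : TreeAut d) : Equiv.Perm (List (Fin d))) v.1,
        by rw [(g⁻¹ : TreeAut d).2.1, v.2]⟩
      left_inv := fun v => Subtype.ext (by simp)
      right_inv := fun v => Subtype.ext (by simp) }
  map_one' := by ext v; rfl
  map_mul' g h := by ext v; rfl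

/-- The fraction of elements of `G_n` (the image of `G` acting on level `n`)
having at least one fixed point on level `n`. -/
noncomputable def fixedRatio {d : ℕ} (G : Subgroup (TreeAut d)) (n : ℕ) : ℝ :=
  (Nat.card {p : Equiv.Perm (Level d n) // p ∈ G.map (levelHom d n) ∧ ∃ v, p v = v} : ℝ) /
    (Nat.card (G.map (levelHom d n)) : ℝ)

/-- `G ≤ Aut(X*)` is contracting: there is a finite subset `N ⊆ G` such that every
`g ∈ G` has all its restrictions at sufficiently long words inside `N`. -/
def Contracting {d : ℕ} (G : Subgroup (TreeAut d)) : Prop :=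
  ∃ N : Set (TreeAut d), N.Finite ∧ N ⊆ (G : Set (TreeAut d)) ∧
    ∀ g ∈ G, ∃ m : ℕ, 1 ≤ m ∧ ∀ v : List (Fin d), m ≤ v.length → TreeAut.restrict g v ∈ N

/-- The set `N₁` of elements of `G` fixing a non-empty word `v` with `g|_v = g`. -/
def N1 {d : ℕ} (G : Subgroup (TreeAut d)) : Set (TreeAut d) :=
  {g | g ∈ G ∧ ∃ v : List (Fin d), v ≠ [] ∧ TreeAut.restrict g v = g ∧
    (g : Equiv.Perm (List (Fin d))) v = v}

section Profinite

/-- Permutation groups of (finite) levels carry the discrete topology. -/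
instance (α : Type*) : TopologicalSpace (Equiv.Perm α) := ⊥

instance (α : Type*) : DiscreteTopology (Equiv.Perm α) := ⟨rfl⟩

instance (α : Type*) : IsTopologicalGroup (Equiv.Perm α) where
  continuous_mul := continuous_of_discreteTopology
  continuous_inv := continuous_of_discreteTopology

instance (d n : ℕ) : Finite (Equiv.Perm (Level d n)) := by
  have : Finite (Level d n) := Level.finite d n
  exact Finite.of_injective (fun e : Equiv.Perm (Level d n) => (⇑e, ⇑e.symm))
    (fun e e' h => Equiv.ext fun v => congrFun (Prod.mk.injEq _ _ _ _ ▸ h).1 v)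

/-- The simultaneous action of a tree automorphism on all levels of the tree. -/
def prodHom (d : ℕ) : TreeAut d →* Π n : ℕ, Equiv.Perm (Level d n) :=
  Pi.monoidHom fun n => levelHom d n

/-- `G∞`: the closure of (the image of) `G` in the profinite group `Π_n Sym(X^n)`;
equivalently, the inverse limit of the finite groups `G_n`. -/
def Ginf {d : ℕ} (G : Subgroup (TreeAut d)) : Subgroup (Π n : ℕ, Equiv.Perm (Level d n)) :=
  (G.map (prodHom d)).topologicalClosure

instance {d : ℕ} (G : Subgroup (TreeAut d)) : CompactSpace (Ginf G) :=
  isCompact_iff_compactSpace.mp ((Subgroup.isClosed_topologicalClosure _).isCompact)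

instance {d : ℕ} (G : Subgroup (TreeAut d)) : MeasurableSpace (Ginf G) := borel _

instance {d : ℕ} (G : Subgroup (TreeAut d)) : BorelSpace (Ginf G) := ⟨rfl⟩

/-- `Y_n(g)`: the number of fixed points of `π_n(g)` on the `n`-th level `X^n`. -/
noncomputable def Ynat {d : ℕ} (G : Subgroup (TreeAut d)) (n : ℕ) (g : Ginf G) : ℕ :=
  Nat.card {v : Level d n // (g : Π m : ℕ, Equiv.Perm (Level d m)) n v = v}

/-- An element `g` of `G∞` fixes the end `w ∈ X^ω` if it fixes every finite initial
segment of `w`. -/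
def GinfFixesEnd {d : ℕ} {G : Subgroup (TreeAut d)} (g : Ginf G) (w : ℕ → Fin d) : Prop :=
  ∀ n : ℕ, (g : Π m : ℕ, Equiv.Perm (Level d m)) n ⟨(List.range n).map w, by simp⟩ =
    ⟨(List.range n).map w, by simp⟩

end Profinite

section FPP
open Finset

variable {d : ℕ}

noncomputable instance (d m : ℕ) : Fintype (Level d m) := Fintype.ofFinite _

namespace FPP

/-- Pad a word of length `i` to length `n` with zeros. -/
def extendW (hd : 2 ≤ d) {i n : ℕ} (hi : i ≤ n) (v : Level d i) : Level d n :=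
  ⟨v.1 ++ List.replicate (n - i) ⟨0, by omega⟩, by simp [v.2]; omega⟩

/-- Truncate a word of length `n` to its prefix of length `i`. -/
def truncW {n : ℕ} (i : ℕ) (hi : i ≤ n) (c : Level d n) : Level d i :=
  ⟨c.1.take i, by simp [c.2]; omega⟩

/-- The level-`i` data extracted from a level-`n` permutation. -/
def resW (hd : 2 ≤ d) {n : ℕ} (i : ℕ) (hi : i ≤ n) (p : Equiv.Perm (Level d n))
    (v : Level d i) : Level d i :=
  truncW i hi (p (extendW hd hi v))

theorem truncW_extendW (hd : 2 ≤ d) {i n : ℕ} (hi : i ≤ n) (v : Level d i) :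
    truncW i hi (extendW hd hi v) = v :=
  Subtype.ext (List.take_left' v.2)

theorem treeAut_take (g : TreeAut d) (c : List (Fin d)) (i : ℕ) (hic : i ≤ c.length) :
    ((g : Equiv.Perm (List (Fin d))) c).take i
      = (g : Equiv.Perm (List (Fin d))) (c.take i) := by
  obtain ⟨u, hu⟩ := (g.prefix_iff (c.take i) c).mp (List.take_prefix i c)
  have hlen : ((g : Equiv.Perm (List (Fin d))) (c.take i)).length = i := by
    rw [g.length_apply, List.length_take]; omega
  rw [← hu, List.take_left' hlen]

theorem levelHom_apply (m : ℕ) (g : TreeAut d) (v : Level d m) :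
    ((levelHom d m g) v).1 = (g : Equiv.Perm (List (Fin d))) v.1 := rfl

theorem truncW_levelHom (g : TreeAut d) {n : ℕ} (i : ℕ) (hi : i ≤ n) (c : Level d n) :
    truncW i hi (levelHom d n g c) = levelHom d i g (truncW i hi c) := by
  refine Subtype.ext ?_
  show (((g : Equiv.Perm (List (Fin d))) c.1).take i) = (g : Equiv.Perm (List (Fin d))) (c.1.take i)
  exact treeAut_take g c.1 i (by rw [c.2]; exact hi)

theorem resW_levelHom (hd : 2 ≤ d) (g : TreeAut d) {n : ℕ} (i : ℕ) (hi : i ≤ n)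
    (v : Level d i) : resW hd i hi (levelHom d n g) v = levelHom d i g v := by
  rw [resW, truncW_levelHom, truncW_extendW]

theorem truncW_apply_of_levelHom (hd : 2 ≤ d) {g : TreeAut d} {n : ℕ}
    {x : Equiv.Perm (Level d n)} (hx : levelHom d n g = x) (i : ℕ) (hi : i ≤ n)
    (c : Level d n) : truncW i hi (x c) = resW hd i hi x (truncW i hi c) := by
  subst hx; rw [truncW_levelHom, resW_levelHom]

theorem truncW_truncW {n : ℕ} (i j : ℕ) (hij : i ≤ j) (hj : j ≤ n) (c : Level d n) :
    truncW i (le_trans hij hj) c = truncW i hij (truncW j hj c) := by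
  refine Subtype.ext ?_
  show c.1.take i = (c.1.take j).take i
  rw [List.take_take, min_eq_left hij]

end FPP
end FPP
namespace FPP
open Finset

variable {d : ℕ}

theorem trans_level {a : TreeAut d} (ha : SphericallyTransitive a) (m : ℕ) (hm : 1 ≤ m)
    (v w : Level d m) : ∃ j : ℤ, ((levelHom d m a) ^ j) v = w := by
  obtain ⟨k, hk⟩ := ha m hm v.1 w.1 v.2 w.2
  exact ⟨k, by rw [← map_zpow]; exact Subtype.ext hk⟩

theorem zpow_fix_eq_one {a : TreeAut d} (ha : SphericallyTransitive a) (m : ℕ) (hm : 1 ≤ m)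
    (s : ℤ) (v : Level d m) (h : ((levelHom d m a) ^ s) v = v) :
    (levelHom d m a) ^ s = 1 := by
  ext w
  obtain ⟨j, hj⟩ := trans_level ha m hm v w
  rw [← hj, ← Equiv.Perm.mul_apply, ← zpow_add, add_comm, zpow_add,
    Equiv.Perm.mul_apply, h, Equiv.Perm.one_apply]

theorem fix_iff_dvd {a : TreeAut d} (ha : SphericallyTransitive a) (m : ℕ) (hm : 1 ≤ m)
    (s : ℤ) (v : Level d m) :
    ((levelHom d m a) ^ s) v = v ↔ (orderOf (levelHom d m a) : ℤ) ∣ s := by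
  constructor
  · intro h
    exact orderOf_dvd_iff_zpow_eq_one.mpr (zpow_fix_eq_one ha m hm s v h)
  · intro h
    rw [orderOf_dvd_iff_zpow_eq_one.mp h, Equiv.Perm.one_apply]

section Trans

variable {a : TreeAut d} (ha : SphericallyTransitive a) {n : ℕ} (hn : 2 ≤ n) (hd : 2 ≤ d)

/-- The order of the spherically transitive element at level `n-1`. -/
noncomputable def DD (a : TreeAut d) (n : ℕ) : ℕ := orderOf (levelHom d (n-1) a)

/-- The kernel element: `a`'s level-`n` action to the power `D`. -/
noncomputable def kk (a : TreeAut d) (n : ℕ) : Equiv.Perm (Level d n) :=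
  (levelHom d n a) ^ (DD a n)

/-- The common size of the sibling fibers. -/
noncomputable def ee (a : TreeAut d) (n : ℕ) : ℕ := orderOf (kk a n)

theorem ee_pos : 0 < ee a n := orderOf_pos _

theorem kk_levelHom : kk a n = levelHom d n (a ^ (DD a n)) := by
  rw [kk, map_pow]

theorem trunc_kk_pow (j : ℕ) (c : Level d n) :
    truncW (n-1) (by omega) ((kk a n ^ j) c) = truncW (n-1) (by omega) c := by
  have h1 : kk a n ^ j = levelHom d n (a ^ (DD a n * j)) := by
    rw [kk, ← pow_mul, map_pow]
  rw [h1, truncW_levelHom, map_pow]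
  have h2 : (levelHom d (n-1) a) ^ (DD a n * j) = 1 :=
    orderOf_dvd_iff_pow_eq_one.mp (Dvd.intro j rfl)
  rw [h2, Equiv.Perm.one_apply]

theorem trunc_kk_zpow (j : ℤ) (c : Level d n) :
    truncW (n-1) (by omega) (((kk a n) ^ j) c) = truncW (n-1) (by omega) c := by
  have h1 : (kk a n) ^ j = levelHom d n (a ^ ((DD a n : ℤ) * j)) := by
    rw [kk, map_zpow, ← zpow_natCast ((levelHom d n) a) (DD a n), ← zpow_mul]
  rw [h1, truncW_levelHom, map_zpow]
  have h2 : (levelHom d (n-1) a) ^ ((DD a n : ℤ) * j) = 1 :=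
    orderOf_dvd_iff_zpow_eq_one.mp (Dvd.intro j rfl)
  rw [h2, Equiv.Perm.one_apply]

include ha hn in
theorem kk_zpow_fix {s : ℤ} {c : Level d n} (h : ((kk a n) ^ s) c = c) :
    (kk a n) ^ s = 1 := by
  have : ((levelHom d n a) ^ ((DD a n : ℤ) * s)) c = c := by
    rw [zpow_mul, zpow_natCast]; exact h
  have h1 := zpow_fix_eq_one ha n (by omega) _ c this
  rw [zpow_mul, zpow_natCast] at h1
  exact h1

include ha hn in
theorem exists_kk_pow (c c' : Level d n)
    (hcc : truncW (n-1) (by omega) c' = truncW (n-1) (by omega) c) :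
    ∃ j : ℕ, j < ee a n ∧ (kk a n ^ j) c = c' := by
  obtain ⟨m, hm⟩ := trans_level ha n (by omega) c c'
  have hcompat : ((levelHom d (n-1) a) ^ m) (truncW (n-1) (by omega) c)
      = truncW (n-1) (by omega) c' := by
    rw [← map_zpow, ← truncW_levelHom, map_zpow, hm]
  rw [hcc] at hcompat
  obtain ⟨q, hq⟩ := (fix_iff_dvd ha (n-1) (by omega) m _).mp hcompat
  have hkq : ((kk a n) ^ q) c = c' := by
    rw [kk, ← zpow_natCast ((levelHom d n a)) (DD a n), ← zpow_mul, DD, ← hq, hm]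
  -- reduce q mod (ee a n)
  set e := ee a n with he
  have hepos : (0:ℤ) < e := by exact_mod_cast ee_pos
  refine ⟨(q % e).toNat, ?_, ?_⟩
  · have hh1 := Int.emod_lt_of_pos q hepos
    have hh2 := Int.emod_nonneg q (show (e:ℤ) ≠ 0 by omega)
    omega
  · have hmod : (kk a n) ^ ((q % e : ℤ)) = (kk a n) ^ q := by
      conv_rhs => rw [← Int.emod_add_mul_ediv q e]
      have hke : (kk a n) ^ e = 1 := by rw [he, ee]; exact pow_orderOf_eq_one _
      rw [zpow_add, zpow_mul, zpow_natCast, hke, one_zpow, mul_one]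
    have hnonneg : 0 ≤ q % e := Int.emod_nonneg q (by omega)
    rw [← zpow_natCast, Int.toNat_of_nonneg hnonneg, hmod, hkq]

include ha hn in
theorem kk_pow_inj {j j' : ℕ} (hj : j < ee a n) (hj' : j' < ee a n) (c : Level d n)
    (h : (kk a n ^ j) c = (kk a n ^ j') c) : j = j' := by
  have hz : ((kk a n) ^ ((j : ℤ) - j')) c = c := by
    have : ((kk a n) ^ (j' : ℤ)) (((kk a n) ^ ((j:ℤ) - j')) c) = ((kk a n) ^ (j':ℤ)) c := by
      rw [← Equiv.Perm.mul_apply, ← zpow_add]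
      have : (j' : ℤ) + ((j:ℤ) - j') = (j:ℤ) := by ring
      rw [this, zpow_natCast, zpow_natCast, h]
    exact (Equiv.injective _) this
  have h1 := kk_zpow_fix ha hn hz
  have h2 : (ee a n : ℤ) ∣ ((j:ℤ) - j') := orderOf_dvd_iff_zpow_eq_one.mpr h1
  have := Int.eq_zero_of_abs_lt_dvd h2 (by rw [abs_sub_lt_iff]; omega)
  omega

end Trans
end FPP
namespace FPP
open Finset
open scoped Classical

variable {d : ℕ}

/-- Number of fixed points of a level-`m` permutation. -/
noncomputable def fixCount {m : ℕ} (p : Equiv.Perm (Level d m)) : ℕ :=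
  (univ.filter fun c => p c = c).card

/-- Number of level-`i` fixed points of the level-`i` data of a level-`n` permutation. -/
noncomputable def cntW (hd : 2 ≤ d) {n : ℕ} (i : ℕ) (hi : i ≤ n)
    (x : Equiv.Perm (Level d n)) : ℕ :=
  (univ.filter fun v : Level d i => resW hd i hi x v = v).card

section Count

variable {a : TreeAut d} (ha : SphericallyTransitive a) {n : ℕ} (hn : 2 ≤ n) (hd : 2 ≤ d)

include ha hn in
theorem count_kk (c w : Level d n) :
    ((range (ee a n)).filter (fun j => ((kk a n) ^ j) c = w)).card
      = if truncW (n-1) (Nat.sub_le n 1) w = truncW (n-1) (Nat.sub_le n 1) c then 1 else 0 := by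
  split_ifs with h
  · rw [Finset.card_eq_one]
    obtain ⟨j, hj, hjc⟩ := exists_kk_pow ha hn c w h
    refine ⟨j, Finset.eq_singleton_iff_unique_mem.mpr ⟨?_, ?_⟩⟩
    · simp only [mem_filter, mem_range]; exact ⟨hj, hjc⟩
    · intro j' hj'
      simp only [mem_filter, mem_range] at hj'
      exact kk_pow_inj ha hn hj'.1 hj c (hj'.2.trans hjc.symm)
  · rw [Finset.card_eq_zero, Finset.filter_eq_empty_iff]
    intro j _ hjc
    exact h (by rw [← hjc]; exact trunc_kk_pow hn j c)

include ha hn hd in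
theorem card_fiber (v : Level d (n-1)) :
    (univ.filter fun c : Level d n => truncW (n-1) (Nat.sub_le n 1) c = v).card = ee a n := by
  set c₀ : Level d n := extendW hd (Nat.sub_le n 1) v with hc₀
  have htr : truncW (n-1) (Nat.sub_le n 1) c₀ = v := truncW_extendW hd _ v
  calc (univ.filter fun c : Level d n => truncW (n-1) (Nat.sub_le n 1) c = v).card
      = ∑ c : Level d n, if truncW (n-1) (Nat.sub_le n 1) c = v then 1 else 0 := by
        rw [Finset.card_filter]
    _ = ∑ c : Level d n,
        ((range (ee a n)).filter (fun j => ((kk a n) ^ j) c₀ = c)).card := by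
        refine Finset.sum_congr rfl fun c _ => ?_
        rw [count_kk ha hn c₀ c, htr]
    _ = ∑ c : Level d n, ∑ j ∈ range (ee a n), if ((kk a n) ^ j) c₀ = c then 1 else 0 := by
        refine Finset.sum_congr rfl fun c _ => ?_
        rw [Finset.card_filter]
    _ = ∑ j ∈ range (ee a n), ∑ c : Level d n, if ((kk a n) ^ j) c₀ = c then 1 else 0 :=
        Finset.sum_comm
    _ = ∑ j ∈ range (ee a n), 1 := by
        refine Finset.sum_congr rfl fun j _ => ?_
        rw [Finset.sum_ite_eq]; simp
    _ = ee a n := by simp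

end Count
end FPP
namespace FPP
open Finset
open scoped Classical

variable {d : ℕ}

/-- The conditioning event, as a predicate on level-`n` permutations. -/
def condP (hd : 2 ≤ d) {n : ℕ} (t : ℕ → ℕ) (x : Equiv.Perm (Level d n)) : Prop :=
  ∀ i, 1 ≤ i → ∀ h2 : i ≤ n - 1, cntW hd i (le_trans h2 (Nat.sub_le n 1)) x = t i

section Main

variable {a : TreeAut d} (ha : SphericallyTransitive a) {n : ℕ} (hn : 2 ≤ n) (hd : 2 ≤ d)
  {G : Subgroup (TreeAut d)} (haG : a ∈ G)

include haG in
theorem kk_zpow_mem (j : ℤ) : (kk a n) ^ j ∈ Subgroup.map (levelHom d n) G := by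
  rw [show kk a n = levelHom d n (a ^ DD a n) from kk_levelHom, ← map_zpow]
  exact Subgroup.mem_map_of_mem _ (zpow_mem (pow_mem haG _) j)

include hn in
theorem resW_mul_kk_zpow {x : Equiv.Perm (Level d n)}
    {g : TreeAut d} (hgx : levelHom d n g = x)
    (i : ℕ) (hi : i ≤ n - 1) (j : ℤ) (v : Level d i) :
    resW hd i (le_trans hi (Nat.sub_le n 1)) (x * (kk a n) ^ j) v
      = resW hd i (le_trans hi (Nat.sub_le n 1)) x v := by
  have hi' : i ≤ n := le_trans hi (Nat.sub_le n 1)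
  show truncW i hi' ((x * (kk a n) ^ j) (extendW hd hi' v)) = _
  rw [Equiv.Perm.mul_apply, truncW_apply_of_levelHom hd hgx i hi']
  congr 1
  rw [truncW_truncW i (n-1) hi (Nat.sub_le n 1), trunc_kk_zpow hn j,
    ← truncW_truncW i (n-1) hi (Nat.sub_le n 1), truncW_extendW]

include hn in
theorem condP_mul_kk_zpow {x : Equiv.Perm (Level d n)}
    {g : TreeAut d} (hgx : levelHom d n g = x) (j : ℤ) (t : ℕ → ℕ) :
    condP hd t (x * (kk a n) ^ j) ↔ condP hd t x := by
  unfold condP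
  refine forall_congr' fun i => forall_congr' fun h1 => forall_congr' fun h2 => ?_
  have : cntW hd i (le_trans h2 (Nat.sub_le n 1)) (x * (kk a n) ^ j)
      = cntW hd i (le_trans h2 (Nat.sub_le n 1)) x := by
    unfold cntW
    refine congrArg Finset.card (Finset.filter_congr fun v _ => ?_)
    rw [resW_mul_kk_zpow hn hd hgx i h2 j v]
  rw [this]

include ha hn in
theorem inner_sum {x : Equiv.Perm (Level d n)}
    (hx : x ∈ Subgroup.map (levelHom d n) G) :
    ∑ j ∈ range (ee a n), fixCount (x * (kk a n) ^ j)
      = ee a n * cntW hd (n-1) (Nat.sub_le n 1) x := by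
  obtain ⟨g, hg, hgx⟩ := hx
  have hiff : ∀ c : Level d n,
      (truncW (n-1) (Nat.sub_le n 1) (x⁻¹ c) = truncW (n-1) (Nat.sub_le n 1) c)
        ↔ (resW hd (n-1) (Nat.sub_le n 1) x (truncW (n-1) (Nat.sub_le n 1) c)
            = truncW (n-1) (Nat.sub_le n 1) c) := by
    intro c
    have hinv : levelHom d n g⁻¹ = x⁻¹ := by rw [map_inv, hgx]
    rw [truncW_apply_of_levelHom hd hinv (n-1) (Nat.sub_le n 1) c]
    rw [← hinv, resW_levelHom hd g⁻¹ (n-1) (Nat.sub_le n 1)]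
    rw [← hgx, resW_levelHom hd g (n-1) (Nat.sub_le n 1)]
    rw [map_inv, Equiv.Perm.inv_def, Equiv.symm_apply_eq]
    exact eq_comm
  calc ∑ j ∈ range (ee a n), fixCount (x * (kk a n) ^ j)
      = ∑ j ∈ range (ee a n), ∑ c : Level d n, if ((kk a n) ^ j) c = x⁻¹ c then 1 else 0 := by
        refine Finset.sum_congr rfl fun j _ => ?_
        rw [fixCount, Finset.card_filter]
        refine Finset.sum_congr rfl fun c _ => if_congr ?_ rfl rfl
        rw [Equiv.Perm.mul_apply]
        exact Equiv.apply_eq_iff_eq_symm_apply x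
    _ = ∑ c : Level d n, ∑ j ∈ range (ee a n), if ((kk a n) ^ j) c = x⁻¹ c then 1 else 0 :=
        Finset.sum_comm
    _ = ∑ c : Level d n, if truncW (n-1) (Nat.sub_le n 1) (x⁻¹ c)
          = truncW (n-1) (Nat.sub_le n 1) c then 1 else 0 := by
        refine Finset.sum_congr rfl fun c _ => ?_
        rw [← Finset.card_filter, count_kk ha hn c (x⁻¹ c)]
    _ = ∑ c : Level d n, (fun v : Level d (n-1) =>
          if resW hd (n-1) (Nat.sub_le n 1) x v = v then 1 else 0)
          (truncW (n-1) (Nat.sub_le n 1) c) := by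
        refine Finset.sum_congr rfl fun c _ => ?_
        simp only
        rw [if_congr (hiff c) rfl rfl]
    _ = ∑ v : Level d (n-1), ∑ c ∈ univ.filter
          (fun c : Level d n => truncW (n-1) (Nat.sub_le n 1) c = v),
          (if resW hd (n-1) (Nat.sub_le n 1) x v = v then 1 else 0) :=
        (Finset.sum_fiberwise' univ (truncW (n-1) (Nat.sub_le n 1))
          (fun v => if resW hd (n-1) (Nat.sub_le n 1) x v = v then 1 else 0)).symm
    _ = ∑ v : Level d (n-1), ee a n *
          (if resW hd (n-1) (Nat.sub_le n 1) x v = v then 1 else 0) := by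
        refine Finset.sum_congr rfl fun v _ => ?_
        rw [Finset.sum_const, card_fiber ha hn hd v, smul_eq_mul]
    _ = ee a n * cntW hd (n-1) (Nat.sub_le n 1) x := by
        rw [← Finset.mul_sum, cntW, Finset.card_filter]

include ha hn haG in
theorem main_count (t : ℕ → ℕ) :
    ∑ x ∈ univ.filter (fun x : Equiv.Perm (Level d n) =>
        x ∈ Subgroup.map (levelHom d n) G ∧ condP hd t x), fixCount x
      = t (n-1) * (univ.filter (fun x : Equiv.Perm (Level d n) =>
        x ∈ Subgroup.map (levelHom d n) G ∧ condP hd t x)).card := by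
  set S' := univ.filter (fun x : Equiv.Perm (Level d n) =>
    x ∈ Subgroup.map (levelHom d n) G ∧ condP hd t x) with hS'
  have hmem : ∀ x ∈ S', x ∈ Subgroup.map (levelHom d n) G ∧ condP hd t x := by
    intro x hx; exact (Finset.mem_filter.mp hx).2
  have hS'inv : ∀ (j : ℤ) (x), x ∈ S' → x * (kk a n) ^ j ∈ S' := by
    intro j x hx
    obtain ⟨hxR, hxc⟩ := hmem x hx
    obtain ⟨g, hg, hgx⟩ := id hxR
    refine Finset.mem_filter.mpr ⟨Finset.mem_univ _, mul_mem hxR (kk_zpow_mem haG j), ?_⟩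
    exact (condP_mul_kk_zpow hn hd hgx j t).mpr hxc
  have key : ∀ j : ℕ, ∑ x ∈ S', fixCount (x * (kk a n) ^ j) = ∑ x ∈ S', fixCount x := by
    intro j
    refine Finset.sum_nbij' (fun x => x * (kk a n) ^ j) (fun y => y * ((kk a n) ^ j)⁻¹)
      ?_ ?_ ?_ ?_ ?_
    · intro x hx
      have := hS'inv (j : ℤ) x hx
      rwa [zpow_natCast] at this
    · intro y hy
      have := hS'inv (-(j : ℤ)) y hy
      rwa [zpow_neg, zpow_natCast] at this
    · intro x _; group
    · intro y _; group
    · intro x _; rfl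
  have lhs_eq : ee a n * ∑ x ∈ S', fixCount x
      = ee a n * (t (n-1) * S'.card) := by
    calc ee a n * ∑ x ∈ S', fixCount x
        = ∑ j ∈ range (ee a n), ∑ x ∈ S', fixCount x := by
          rw [Finset.sum_const, Finset.card_range, smul_eq_mul]
      _ = ∑ j ∈ range (ee a n), ∑ x ∈ S', fixCount (x * (kk a n) ^ j) := by
          refine Finset.sum_congr rfl fun j _ => (key j).symm
      _ = ∑ x ∈ S', ∑ j ∈ range (ee a n), fixCount (x * (kk a n) ^ j) := Finset.sum_comm
      _ = ∑ x ∈ S', ee a n * t (n-1) := by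
          refine Finset.sum_congr rfl fun x hx => ?_
          obtain ⟨hxR, hxc⟩ := hmem x hx
          rw [inner_sum ha hn hd hxR, hxc (n-1) (by omega) (le_refl _)]
      _ = S'.card * (ee a n * t (n-1)) := by rw [Finset.sum_const, smul_eq_mul]
      _ = ee a n * (t (n-1) * S'.card) := by ring
  exact Nat.eq_of_mul_eq_mul_left (ee_pos) lhs_eq

end Main
end FPP
namespace FPP
open Finset MeasureTheory
open scoped Classical

variable {d : ℕ}

theorem prodHom_apply (g : TreeAut d) (m : ℕ) : prodHom d g m = levelHom d m g := rfl

theorem Ginf_compat (hd : 2 ≤ d) {G : Subgroup (TreeAut d)}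
    {p : Π m : ℕ, Equiv.Perm (Level d m)} (hp : p ∈ Ginf G) {n : ℕ} (i : ℕ) (hi : i ≤ n)
    (v : Level d i) : p i v = resW hd i hi (p n) v := by
  set S : Set (Π m : ℕ, Equiv.Perm (Level d m)) :=
    {q | ∀ w : Level d i, q i w = resW hd i hi (q n) w} with hS
  have hclosed : IsClosed S := by
    have : S = ⋂ w : Level d i, (fun q : Π m : ℕ, Equiv.Perm (Level d m) => (q i, q n)) ⁻¹'
        {z : Equiv.Perm (Level d i) × Equiv.Perm (Level d n) | z.1 w = resW hd i hi z.2 w} := by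
      ext q; simp [hS, Set.mem_iInter]
    rw [this]
    refine isClosed_iInter fun w => IsClosed.preimage ?_ ?_
    · exact (continuous_apply i).prodMk (continuous_apply n)
    · exact isClosed_discrete _
  have hbase : ↑(Subgroup.map (prodHom d) G) ⊆ S := by
    rintro q ⟨g, -, rfl⟩ w
    show levelHom d i g w = resW hd i hi (levelHom d n g) w
    rw [resW_levelHom]
  have : p ∈ closure ↑(Subgroup.map (prodHom d) G) := by
    rw [← Subgroup.topologicalClosure_coe]; exact hp
  exact closure_minimal hbase hclosed this v

theorem Ginf_proj_mem {G : Subgroup (TreeAut d)}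
    {p : Π m : ℕ, Equiv.Perm (Level d m)} (hp : p ∈ Ginf G) (n : ℕ) :
    p n ∈ Subgroup.map (levelHom d n) G := by
  set S : Set (Π m : ℕ, Equiv.Perm (Level d m)) :=
    (fun q : Π m : ℕ, Equiv.Perm (Level d m) => q n) ⁻¹' ↑(Subgroup.map (levelHom d n) G)
  have hclosed : IsClosed S := IsClosed.preimage (continuous_apply n) (isClosed_discrete _)
  have hbase : ↑(Subgroup.map (prodHom d) G) ⊆ S := by
    rintro q ⟨g, hg, rfl⟩
    exact ⟨g, hg, rfl⟩
  have : p ∈ closure ↑(Subgroup.map (prodHom d) G) := by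
    rw [← Subgroup.topologicalClosure_coe]; exact hp
  exact closure_minimal hbase hclosed this

theorem Ynat_eq_cntW (hd : 2 ≤ d) {G : Subgroup (TreeAut d)} {n : ℕ} (i : ℕ) (hi : i ≤ n)
    (g : Ginf G) :
    Ynat G i g = cntW hd i hi ((g : Π m : ℕ, Equiv.Perm (Level d m)) n) := by
  rw [Ynat]
  rw [Nat.card_congr (Equiv.subtypeEquivRight (q := fun v : Level d i =>
    resW hd i hi ((g : Π m : ℕ, Equiv.Perm (Level d m)) n) v = v)
    (fun v => by rw [Ginf_compat hd g.2 i hi v]))]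
  rw [Nat.card_eq_fintype_card, cntW, Fintype.card_subtype]

theorem Ynat_eq_fixCount {G : Subgroup (TreeAut d)} {n : ℕ} (g : Ginf G) :
    Ynat G n g = fixCount ((g : Π m : ℕ, Equiv.Perm (Level d m)) n) := by
  rw [Ynat, Nat.card_eq_fintype_card, fixCount, Fintype.card_subtype]

/-- The fiber of the projection to level `n` over `x`. -/
def fib {G : Subgroup (TreeAut d)} (n : ℕ) (x : Equiv.Perm (Level d n)) : Set (Ginf G) :=
  {g : Ginf G | (g : Π m : ℕ, Equiv.Perm (Level d m)) n = x}

theorem fib_measurable {G : Subgroup (TreeAut d)} (n : ℕ) (x : Equiv.Perm (Level d n)) :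
    MeasurableSet (fib (G := G) n x) := by
  have hcont : Continuous fun g : Ginf G => (g : Π m : ℕ, Equiv.Perm (Level d m)) n :=
    (continuous_apply n).comp continuous_subtype_val
  exact (IsClosed.preimage hcont (isClosed_discrete {x})).measurableSet

theorem exists_Ginf_of_mem {G : Subgroup (TreeAut d)} {n : ℕ} {x : Equiv.Perm (Level d n)}
    (hx : x ∈ Subgroup.map (levelHom d n) G) :
    ∃ g : Ginf G, (g : Π m : ℕ, Equiv.Perm (Level d m)) n = x := by
  obtain ⟨g, hg, rfl⟩ := hx
  exact ⟨⟨prodHom d g, Subgroup.le_topologicalClosure _ ⟨g, hg, rfl⟩⟩, rfl⟩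

theorem fib_measure_eq {G : Subgroup (TreeAut d)} {n : ℕ}
    (μ : Measure (Ginf G)) [μ.IsHaarMeasure] {x y : Equiv.Perm (Level d n)}
    (hx : x ∈ Subgroup.map (levelHom d n) G) (hy : y ∈ Subgroup.map (levelHom d n) G) :
    μ (fib n y) = μ (fib n x) := by
  obtain ⟨gx, hgx⟩ := exists_Ginf_of_mem hx
  obtain ⟨gy, hgy⟩ := exists_Ginf_of_mem hy
  have hset : fib (G := G) n y = (fun h => (gx * gy⁻¹) * h) ⁻¹' fib n x := by
    ext h
    show (h : Π m : ℕ, Equiv.Perm (Level d m)) n = y ↔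
      ((gx * gy⁻¹ * h : Ginf G) : Π m : ℕ, Equiv.Perm (Level d m)) n = x
    have : ((gx * gy⁻¹ * h : Ginf G) : Π m : ℕ, Equiv.Perm (Level d m)) n
        = x * y⁻¹ * (h : Π m : ℕ, Equiv.Perm (Level d m)) n := by
      have h1 : ((gy⁻¹ : Ginf G) : Π m : ℕ, Equiv.Perm (Level d m)) n = y⁻¹ := by
        rw [← hgy]; rfl
      rw [← hgx, ← h1]; rfl
    rw [this]
    constructor
    · intro h'; rw [h']; group
    · intro h'
      have := congrArg (fun z => (x * y⁻¹)⁻¹ * z) h'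
      simpa [mul_assoc] using this
  rw [hset, measure_preimage_mul μ (gx * gy⁻¹) (fib n x)]

end FPP
open MeasureTheory in
open scoped Classical in
/-- The fixed-point process is a martingale: if `G ≤ Aut(X*)` has a spherically
transitive element then, for `n ≥ 2` and any values `t 1, …, t (n-1)` such that the event
`{Y_1 = t 1, …, Y_{n-1} = t (n-1)}` has positive measure, the conditional expectation of
`Y_n` on this event equals `t (n-1)`. -/
theorem fixedPointProcess_martingale {d : ℕ} (hd : 2 ≤ d) (G : Subgroup (TreeAut d))
    (hst : ∃ g ∈ G, SphericallyTransitive g)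
    (μ : Measure (Ginf G)) [μ.IsHaarMeasure] [IsProbabilityMeasure μ]
    (n : ℕ) (hn : 2 ≤ n) (t : ℕ → ℕ)
    (hpos : 0 < μ {g : Ginf G | ∀ i : ℕ, 1 ≤ i → i ≤ n - 1 → Ynat G i g = t i}) :
    ∫ g in {g : Ginf G | ∀ i : ℕ, 1 ≤ i → i ≤ n - 1 → Ynat G i g = t i},
        (Ynat G n g : ℝ) ∂μ
      = (t (n - 1) : ℝ) *
        (μ {g : Ginf G | ∀ i : ℕ, 1 ≤ i → i ≤ n - 1 → Ynat G i g = t i}).toReal := by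
  obtain ⟨a, haG, ha⟩ := hst
  set S' : Finset (Equiv.Perm (Level d n)) := Finset.univ.filter
    (fun x => x ∈ Subgroup.map (levelHom d n) G ∧ FPP.condP hd t x) with hS'
  have hEeq : {g : Ginf G | ∀ i : ℕ, 1 ≤ i → i ≤ n - 1 → Ynat G i g = t i}
      = ⋃ x ∈ S', FPP.fib n x := by
    ext g
    simp only [Set.mem_setOf_eq, Set.mem_iUnion, hS', Finset.mem_filter, Finset.mem_univ,
      true_and, FPP.fib, exists_prop]
    constructor
    · intro h
      refine ⟨(g : Π m : ℕ, Equiv.Perm (Level d m)) n,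
        ⟨FPP.Ginf_proj_mem g.2 n, ?_⟩, rfl⟩
      intro i h1 h2
      rw [← FPP.Ynat_eq_cntW hd i (le_trans h2 (Nat.sub_le n 1)) g]
      exact h i h1 h2
    · rintro ⟨x, ⟨hxR, hxc⟩, hgx⟩ i h1 h2
      rw [FPP.Ynat_eq_cntW hd i (le_trans h2 (Nat.sub_le n 1)) g, hgx]
      exact hxc i h1 h2
  have hdisj : (↑S' : Set (Equiv.Perm (Level d n))).Pairwise
      (Function.onFun Disjoint (FPP.fib (G := G) n)) := by
    intro x _ y _ hxy
    refine Set.disjoint_left.mpr fun g hgx hgy => hxy ?_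
    have h1 : (g : Π m : ℕ, Equiv.Perm (Level d m)) n = x := hgx
    have h2 : (g : Π m : ℕ, Equiv.Perm (Level d m)) n = y := hgy
    rw [← h1, ← h2]
  have hmeas : ∀ x ∈ S', MeasurableSet (FPP.fib (G := G) n x) :=
    fun x _ => FPP.fib_measurable n x
  have hconst : ∀ x ∈ S',
      ∫ g in FPP.fib (G := G) n x, (Ynat G n g : ℝ) ∂μ
        = (μ (FPP.fib (G := G) n x)).toReal * (FPP.fixCount x : ℝ) := by
    intro x _
    have heq : Set.EqOn (fun g : Ginf G => (Ynat G n g : ℝ))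
        (fun _ => (FPP.fixCount x : ℝ)) (FPP.fib n x) := by
      intro g hg
      have h1 : (g : Π m : ℕ, Equiv.Perm (Level d m)) n = x := hg
      simp only [FPP.Ynat_eq_fixCount g, h1]
    rw [setIntegral_congr_fun (FPP.fib_measurable n x) heq, setIntegral_const, smul_eq_mul, Measure.real_def]
  have hint : ∀ x ∈ S',
      IntegrableOn (fun g : Ginf G => (Ynat G n g : ℝ)) (FPP.fib n x) μ := by
    intro x _
    refine ((integrableOn_const_iff (C := (FPP.fixCount x : ℝ))).mpr
      (Or.inr (measure_lt_top μ _))).congr_fun ?_ (FPP.fib_measurable n x)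
    intro g hg
    have h1 : (g : Π m : ℕ, Equiv.Perm (Level d m)) n = x := hg
    simp only [FPP.Ynat_eq_fixCount g, h1]
  have hfibμ : ∀ x ∈ S', μ (FPP.fib (G := G) n x) = μ (FPP.fib (G := G) n 1) := by
    intro x hx
    have hxR : x ∈ Subgroup.map (levelHom d n) G := (Finset.mem_filter.mp hx).2.1
    exact FPP.fib_measure_eq μ (Subgroup.one_mem _) hxR
  set ν := μ (FPP.fib (G := G) n 1) with hν
  have hμE : μ {g : Ginf G | ∀ i : ℕ, 1 ≤ i → i ≤ n - 1 → Ynat G i g = t i}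
      = S'.card • ν := by
    rw [hEeq, measure_biUnion_finset hdisj (fun x _ => FPP.fib_measurable n x),
      Finset.sum_congr rfl hfibμ, Finset.sum_const]
  have hInt : ∫ g in {g : Ginf G | ∀ i : ℕ, 1 ≤ i → i ≤ n - 1 → Ynat G i g = t i},
      (Ynat G n g : ℝ) ∂μ = ν.toReal * ∑ x ∈ S', (FPP.fixCount x : ℝ) := by
    rw [hEeq, integral_biUnion_finset S' hmeas hdisj hint, Finset.mul_sum]
    refine Finset.sum_congr rfl fun x hx => ?_
    rw [hconst x hx, hfibμ x hx]
  have hcount := FPP.main_count ha hn hd haG t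
  rw [hInt, hμE]
  have hsum : ∑ x ∈ S', (FPP.fixCount x : ℝ) = (t (n-1) : ℝ) * (S'.card : ℝ) := by
    rw [← Nat.cast_sum]
    rw [show (∑ x ∈ S', FPP.fixCount x) = t (n-1) * S'.card from hcount]
    push_cast
    ring
  rw [hsum]
  have hν_fin : ν ≠ ⊤ := measure_ne_top μ _
  rw [nsmul_eq_mul, ENNReal.toReal_mul]
  simp only [ENNReal.toReal_natCast]
  ring
end

section
/- Let T = (π_1, …, π_n) be a tree-like multi-set of permutations of a finite set X, let I ⊆ {1, …, n} be non-empty, and let σ be the product of the permutations π_i for i ∈ I (taken in any fixed order). If σ(x) = x for some x ∈ X, then π_i(x) = x for every i ∈ I. -/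
/-- The cycle graph of a multi-set (indexed family) of permutations of `X`: a bipartite
graph whose white vertices are the points of `X` and whose black vertices are the cycles
of length at least 2 of the permutations (counted with multiplicity over the index set),
a white vertex being joined to a cycle exactly when the cycle moves it. -/
def cycleGraph {I X : Type*} [Fintype X] [DecidableEq X] (π : I → Equiv.Perm X) :
    SimpleGraph (X ⊕ {p : I × Equiv.Perm X // p.2 ∈ (π p.1).cycleFactorsFinset}) where
  Adj a b := ∃ (x : X) (c : {p : I × Equiv.Perm X // p.2 ∈ (π p.1).cycleFactorsFinset}),
    c.1.2 x ≠ x ∧ ((a = Sum.inl x ∧ b = Sum.inr c) ∨ (a = Sum.inr c ∧ b = Sum.inl x))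
  symm := by
    constructor
    rintro a b ⟨x, c, hc, (⟨rfl, rfl⟩ | ⟨rfl, rfl⟩)⟩
    · exact ⟨x, c, hc, Or.inr ⟨rfl, rfl⟩⟩
    · exact ⟨x, c, hc, Or.inl ⟨rfl, rfl⟩⟩
  loopless := by
    constructor
    rintro a ⟨x, c, hc, (⟨rfl, h⟩ | ⟨rfl, h⟩)⟩ <;> simp at h

/-- A multi-set (indexed family) of permutations of `X` is tree-like if its cycle graph
is a tree. -/
def TreeLikeFamily {I X : Type*} [Fintype X] [DecidableEq X] (π : I → Equiv.Perm X) :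
    Prop :=
  (cycleGraph π).IsTree

/-- The number of fixed points of a permutation of a finite set. -/
def fixCard {X : Type*} [Fintype X] [DecidableEq X] (σ : Equiv.Perm X) : ℕ :=
  (Finset.univ.filter fun x => σ x = x).card

private lemma cycle_apply_ne {X : Type*} (c : Equiv.Perm X) {x : X} (h : c x ≠ x) :
    c (c x) ≠ c x := fun h' => h (c.injective h')

/-- Key induction: following the trajectory of `x` through the product, either every
factor fixes `x` (and the trajectory is constant), or we obtain a walk in the cycle
graph from the final point to the first cycle moving `x`, avoiding the edge between
`x` and that cycle. -/
private lemma treeLike_key {n : ℕ} {X : Type*} [Fintype X] [DecidableEq X]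
    (π : Fin n → Equiv.Perm X) :
    ∀ (l : List (Fin n)), l.Nodup → ∀ x : X,
      ((l.map π).prod x = x ∧ ∀ i ∈ l, π i x = x) ∨
      ∃ c : {p : Fin n × Equiv.Perm X // p.2 ∈ (π p.1).cycleFactorsFinset},
        c.1.1 ∈ l ∧ c.1.2 x ≠ x ∧
        ∃ w : (cycleGraph π).Walk (Sum.inl ((l.map π).prod x)) (Sum.inr c),
          s(Sum.inl x, Sum.inr c) ∉ w.edges := by
  intro l
  induction l with
  | nil => intro _ x; exact Or.inl ⟨by simp, by simp⟩
  | cons a l' ih =>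
    intro hnd x
    have ha : a ∉ l' := (List.nodup_cons.mp hnd).1
    have hnd' : l'.Nodup := (List.nodup_cons.mp hnd).2
    have hprod : ((a :: l').map π).prod x = π a ((l'.map π).prod x) := by
      simp [List.prod_cons, Equiv.Perm.mul_apply]
    rcases ih hnd' x with ⟨hyx, hfix⟩ | ⟨c, hcl, hcx, w, hew⟩
    · by_cases hax : π a x = x
      · refine Or.inl ⟨by rw [hprod, hyx, hax], ?_⟩
        intro i hi
        rcases List.mem_cons.mp hi with rfl | hi
        · exact hax
        · exact hfix i hi
      · -- start the walk with the cycle of `π a` through `x`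
        right
        have hcf : (π a).cycleOf x ∈ (π a).cycleFactorsFinset :=
          Equiv.Perm.cycleOf_mem_cycleFactorsFinset_iff.mpr (Equiv.Perm.mem_support.mpr hax)
        set c : {p : Fin n × Equiv.Perm X // p.2 ∈ (π p.1).cycleFactorsFinset} :=
          ⟨(a, (π a).cycleOf x), hcf⟩ with hc
        have hcx' : c.1.2 x ≠ x := by
          simpa [hc, Equiv.Perm.cycleOf_apply_self] using hax
        have hcy : c.1.2 (c.1.2 x) ≠ c.1.2 x := cycle_apply_ne _ hcx'
        have hxy : c.1.2 x = π a x := by simp [hc, Equiv.Perm.cycleOf_apply_self]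
        have hadj : (cycleGraph π).Adj (Sum.inl (π a x)) (Sum.inr c) := by
          refine ⟨π a x, c, ?_, Or.inl ⟨rfl, rfl⟩⟩
          rw [← hxy]; exact hcy
        have hu : Sum.inl (π a x) = (Sum.inl (((a :: l').map π).prod x) :
            X ⊕ {p : Fin n × Equiv.Perm X // p.2 ∈ (π p.1).cycleFactorsFinset}) := by
          rw [hprod, hyx]
        refine ⟨c, List.mem_cons_self, hcx', (SimpleGraph.Walk.cons hadj
          SimpleGraph.Walk.nil).copy hu rfl, ?_⟩
        rw [SimpleGraph.Walk.edges_copy]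
        simp only [SimpleGraph.Walk.edges_cons, SimpleGraph.Walk.edges_nil,
          List.mem_singleton]
        intro h
        rw [Sym2.eq_iff] at h
        rcases h with ⟨h1, _⟩ | ⟨h1, _⟩
        · exact hax (Sum.inl.inj h1).symm
        · exact (Sum.inl_ne_inr h1).elim
    · -- there is already a walk; extend it if `π a` moves the current point
      have hy' : True := trivial
      by_cases hay : π a ((l'.map π).prod x)  = ((l'.map π).prod x)
      · refine Or.inr ⟨c, List.mem_cons_of_mem a hcl, hcx,
          w.copy (congrArg Sum.inl (by rw [hprod, hay])) rfl, ?_⟩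
        rwa [SimpleGraph.Walk.edges_copy]
      · right
        have hdf : (π a).cycleOf ((l'.map π).prod x) ∈ (π a).cycleFactorsFinset :=
          Equiv.Perm.cycleOf_mem_cycleFactorsFinset_iff.mpr (Equiv.Perm.mem_support.mpr hay)
        set d : {p : Fin n × Equiv.Perm X // p.2 ∈ (π p.1).cycleFactorsFinset} :=
          ⟨(a, (π a).cycleOf ((l'.map π).prod x)), hdf⟩ with hd
        have hdy : d.1.2 ((l'.map π).prod x) ≠ ((l'.map π).prod x) := by
          simpa [hd, Equiv.Perm.cycleOf_apply_self] using hay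
        have hdy2 : d.1.2 (d.1.2 ((l'.map π).prod x)) ≠ d.1.2 ((l'.map π).prod x) := cycle_apply_ne _ hdy
        have hy2 : d.1.2 ((l'.map π).prod x) = π a ((l'.map π).prod x) := by simp [hd, Equiv.Perm.cycleOf_apply_self]
        have hdc : d ≠ c := by
          intro h
          have : d.1.1 = c.1.1 := by rw [h]
          rw [show d.1.1 = a from rfl] at this
          exact ha (this ▸ hcl)
        have hadj1 : (cycleGraph π).Adj (Sum.inl (π a ((l'.map π).prod x))) (Sum.inr d) := by
          refine ⟨π a ((l'.map π).prod x), d, ?_, Or.inl ⟨rfl, rfl⟩⟩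
          rw [← hy2]; exact hdy2
        have hadj2 : (cycleGraph π).Adj (Sum.inr d) (Sum.inl ((l'.map π).prod x)) :=
          ⟨(l'.map π).prod x, d, hdy, Or.inr ⟨rfl, rfl⟩⟩
        refine ⟨c, List.mem_cons_of_mem a hcl, hcx,
          (SimpleGraph.Walk.cons hadj1 (SimpleGraph.Walk.cons hadj2 w)).copy
            (congrArg Sum.inl hprod.symm) rfl, ?_⟩
        rw [SimpleGraph.Walk.edges_copy]
        simp only [SimpleGraph.Walk.edges_cons, List.mem_cons]
        rintro (h | h | h)
        · rw [Sym2.eq_iff] at h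
          rcases h with ⟨_, h2⟩ | ⟨h1, _⟩
          · exact hdc (Sum.inr.inj h2).symm
          · exact Sum.inl_ne_inr h1
        · rw [Sym2.eq_iff] at h
          rcases h with ⟨h1, _⟩ | ⟨_, h2⟩
          · exact Sum.inl_ne_inr h1
          · exact hdc (Sum.inr.inj h2).symm
        · exact hew h

/-- If `(π_1, …, π_n)` is a tree-like multi-set of permutations of a finite set `X` and
`σ` is the product of the `π_i` over a non-empty subset `I` of the indices (listed in any
fixed order, without repetition), then any point fixed by `σ` is fixed by every `π_i`,
`i ∈ I`. -/
theorem treeLike_prod_fixed {n : ℕ} {X : Type*} [Fintype X] [DecidableEq X]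
    (π : Fin n → Equiv.Perm X) (hT : TreeLikeFamily π)
    (l : List (Fin n)) (hne : l ≠ []) (hnd : l.Nodup)
    (x : X) (hx : (l.map π).prod x = x) :
    ∀ i ∈ l, π i x = x := by
  rcases treeLike_key π l hnd x with ⟨_, hfix⟩ | ⟨c, _, hcx, w, hew⟩
  · exact hfix
  · exfalso
    have hadj : (cycleGraph π).Adj (Sum.inl x) (Sum.inr c) :=
      ⟨x, c, hcx, Or.inl ⟨rfl, rfl⟩⟩
    have hbridge := (SimpleGraph.isAcyclic_iff_forall_adj_isBridge.mp
      hT.IsAcyclic) hadj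
    rw [SimpleGraph.isBridge_iff_adj_and_forall_walk_mem_edges] at hbridge
    have hmem := hbridge (w.copy (congrArg Sum.inl hx) rfl)
    rw [SimpleGraph.Walk.edges_copy] at hmem
    exact hew hmem
end

section
/- Let T be a tree-like multi-set of permutations of a finite set X with #X = d ≥ 2. Then the total number of cycles of length ≥ 2 of the elements of T (counted with multiplicity over the elements of T) is at most d − 1, with equality if and only if every element of T is a (possibly empty) product of disjoint transpositions. -/
section Aux

open Equiv Equiv.Perm Finset

variable {X : Type*} [Fintype X] [DecidableEq X]

lemma aux_card_two_of_sq {σ : Perm X} (hσ : σ * σ = 1) {c : Perm X}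
    (hc : c ∈ σ.cycleFactorsFinset) : c.support.card = 2 := by
  obtain ⟨hcyc, hsupp⟩ := (Equiv.Perm.mem_cycleFactorsFinset_iff).mp hc
  have h2 : c * c = 1 := by
    ext y
    by_cases hy : y ∈ c.support
    · have h1 : c y = σ y := hsupp y hy
      have h2 : c y ∈ c.support := Equiv.Perm.apply_mem_support.mpr hy
      have h3 : c (c y) = σ (σ y) := by rw [h1, hsupp _ (h1 ▸ h2)]
      have : σ (σ y) = y := by
        have := congrArg (fun τ : Perm X => τ y) hσ
        simpa using this
      simp [Equiv.Perm.mul_apply, h3, this]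
    · have := Equiv.Perm.notMem_support.mp hy
      simp [Equiv.Perm.mul_apply, this]
  have horder : orderOf c = 2 := by
    haveI : Fact (Nat.Prime 2) := ⟨Nat.prime_two⟩
    exact orderOf_eq_prime (by rw [sq]; exact h2) hcyc.ne_one
  rw [← hcyc.orderOf, horder]

lemma aux_sq_of_card_two {σ : Perm X}
    (h : ∀ c ∈ σ.cycleFactorsFinset, c.support.card = 2) : σ * σ = 1 := by
  ext x
  by_cases hx : σ x = x
  · simp [Equiv.Perm.mul_apply, hx]
  · have hx' : x ∈ σ.support := Equiv.Perm.mem_support.mpr hx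
    have hc : σ.cycleOf x ∈ σ.cycleFactorsFinset :=
      Equiv.Perm.cycleOf_mem_cycleFactorsFinset_iff.mpr hx'
    have hcyc : (σ.cycleOf x).IsCycle := σ.isCycle_cycleOf (Equiv.Perm.mem_support.mp hx' )
    have horder : orderOf (σ.cycleOf x) = 2 := by rw [hcyc.orderOf, h _ hc]
    have h2 : σ.cycleOf x ^ 2 = 1 := by rw [← horder]; exact pow_orderOf_eq_one _
    have := Equiv.Perm.cycleOf_pow_apply_self σ x 2
    rw [h2] at this
    have : (σ ^ 2) x = x := by simpa using this.symm
    simpa [sq, Equiv.Perm.mul_apply] using this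

end Aux


/-- For a tree-like multi-set `T` of permutations of a finite set `X` with `#X = d ≥ 2`,
the total number of cycles of length at least 2 of the elements of `T` (counted with
multiplicity over the elements of `T`) is at most `d - 1`, with equality if and only if
every element of `T` is a (possibly empty) product of disjoint transpositions. -/
theorem treeLike_cycle_count {I X : Type*} [Fintype I] [Fintype X] [DecidableEq X]
    (hd : 2 ≤ Fintype.card X)
    (π : I → Equiv.Perm X) (hT : TreeLikeFamily π) :
    (∑ i : I, (π i).cycleFactorsFinset.card ≤ Fintype.card X - 1) ∧
      ((∑ i : I, (π i).cycleFactorsFinset.card = Fintype.card X - 1) ↔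
        ∀ i : I, π i * π i = 1) := by
  classical
  set C := {p : I × Equiv.Perm X // p.2 ∈ (π p.1).cycleFactorsFinset} with hC
  haveI : Fintype (cycleGraph π).edgeSet := Fintype.ofFinite _
  -- tree edge count
  have htree : (cycleGraph π).edgeFinset.card + 1 = Fintype.card (X ⊕ C) :=
    hT.card_edgeFinset
  -- edge set ≃ incident pairs
  have hbij : Fintype.card {p : X × C // p.2.1.2 p.1 ≠ p.1}
      = (cycleGraph π).edgeFinset.card := by
    rw [SimpleGraph.edgeFinset, Set.toFinset_card]
    refine Fintype.card_congr (Equiv.ofBijective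
      (fun p => ⟨s(Sum.inl p.1.1, Sum.inr p.1.2),
        ⟨p.1.1, p.1.2, p.2, Or.inl ⟨rfl, rfl⟩⟩⟩) ⟨?_, ?_⟩)
    · rintro ⟨⟨x, c⟩, hp⟩ ⟨⟨x', c'⟩, hp'⟩ h
      simp only [Subtype.mk.injEq, Sym2.eq_iff] at h
      replace h := Sym2.eq_iff.mp (congrArg Subtype.val h)
      rcases h with ⟨h1, h2⟩ | ⟨h1, h2⟩ <;> simp_all
    · rintro ⟨e, he⟩
      induction e using Sym2.ind with
      | _ a b =>
        rw [SimpleGraph.mem_edgeSet] at he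
        obtain ⟨x, c, hc, ⟨ha, hb⟩ | ⟨ha, hb⟩⟩ := he
        · subst ha; subst hb; exact ⟨⟨(x, c), hc⟩, rfl⟩
        · subst ha; subst hb; exact ⟨⟨(x, c), hc⟩, Subtype.ext Sym2.eq_swap⟩
  -- card of incident pairs = sum of supports
  have hpairs : Fintype.card {p : X × C // p.2.1.2 p.1 ≠ p.1}
      = ∑ c : C, c.1.2.support.card := by
    rw [Fintype.card_subtype]
    rw [Finset.card_filter]
    rw [Fintype.sum_prod_type_right]
    refine Finset.sum_congr rfl fun c _ => ?_
    rw [← Finset.card_filter]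
    rfl
  -- sum over C = double sum
  have hsumC : ∀ f : I × Equiv.Perm X → ℕ, ∑ c : C, f c.1
      = ∑ i : I, ∑ σ ∈ (π i).cycleFactorsFinset, f (i, σ) := by
    intro f
    rw [← Finset.sum_subtype (Finset.univ.filter
        (fun p : I × Equiv.Perm X => p.2 ∈ (π p.1).cycleFactorsFinset))
        (fun p => by simp) f]
    rw [Finset.sum_filter, Fintype.sum_prod_type]
    refine Finset.sum_congr rfl fun i _ => ?_
    simp [Finset.sum_ite_mem]
  have hcardC : Fintype.card C = ∑ i : I, (π i).cycleFactorsFinset.card := by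
    calc Fintype.card C = ∑ _c : C, 1 := by simp
      _ = ∑ i : I, ∑ _σ ∈ (π i).cycleFactorsFinset, 1 := hsumC (fun _ => 1)
      _ = ∑ i : I, (π i).cycleFactorsFinset.card := by simp
  set N := ∑ i : I, (π i).cycleFactorsFinset.card with hN
  have hS : (cycleGraph π).edgeFinset.card
      = ∑ i : I, ∑ σ ∈ (π i).cycleFactorsFinset, σ.support.card := by
    rw [← hbij, hpairs, hsumC (fun p => p.2.support.card)]
  have hmain : ∑ i : I, ∑ σ ∈ (π i).cycleFactorsFinset, σ.support.card + 1
      = Fintype.card X + N := by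
    rw [← hS, htree, Fintype.card_sum, hcardC]
  have hge : ∀ i : I, ∀ σ ∈ (π i).cycleFactorsFinset, 2 ≤ σ.support.card := by
    intro i σ hσ
    exact ((Equiv.Perm.mem_cycleFactorsFinset_iff).mp hσ).1.two_le_card_support
  have h2N : 2 * N ≤ ∑ i : I, ∑ σ ∈ (π i).cycleFactorsFinset, σ.support.card := by
    rw [hN, Finset.mul_sum]
    refine Finset.sum_le_sum fun i _ => ?_
    rw [Finset.card_eq_sum_ones, Finset.mul_sum]
    exact Finset.sum_le_sum fun σ hσ => by simpa using hge i σ hσ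
  constructor
  · omega
  · have hiff : (∑ i : I, ∑ σ ∈ (π i).cycleFactorsFinset, σ.support.card = 2 * N) ↔
        ∀ i : I, ∀ σ ∈ (π i).cycleFactorsFinset, σ.support.card = 2 := by
      constructor
      · intro heq i σ hσ
        by_contra hne
        have hlt : 2 < σ.support.card := lt_of_le_of_ne (hge i σ hσ) (Ne.symm hne)
        have : 2 * N < ∑ i : I, ∑ σ ∈ (π i).cycleFactorsFinset, σ.support.card := by
          rw [hN, Finset.mul_sum]
          refine Finset.sum_lt_sum (fun j _ => ?_) ⟨i, Finset.mem_univ i, ?_⟩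
          · rw [Finset.card_eq_sum_ones, Finset.mul_sum]
            exact Finset.sum_le_sum fun τ hτ => by simpa using hge j τ hτ
          · rw [Finset.card_eq_sum_ones, Finset.mul_sum]
            refine Finset.sum_lt_sum (fun τ hτ => by simpa using hge i τ hτ)
              ⟨σ, hσ, by simpa using hlt⟩
        omega
      · intro h
        rw [hN, Finset.mul_sum]
        refine Finset.sum_congr rfl fun i _ => ?_
        rw [Finset.card_eq_sum_ones, Finset.mul_sum]
        exact Finset.sum_congr rfl fun σ hσ => by simpa using h i σ hσ
    constructor
    · intro heq
      have : ∑ i : I, ∑ σ ∈ (π i).cycleFactorsFinset, σ.support.card = 2 * N := by omega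
      intro i
      exact aux_sq_of_card_two (hiff.mp this i)
    · intro h
      have : ∑ i : I, ∑ σ ∈ (π i).cycleFactorsFinset, σ.support.card = 2 * N :=
        hiff.mpr fun i σ hσ => aux_card_two_of_sq (h i) hσ
      omega
end

section
/- Let T = (π_1, …, π_n) be a tree-like multi-set of permutations of a finite set X. Then for any indices i ≠ j, #Fix(π_i) + #Fix(π_j) ≥ 2, where #Fix(π) denotes the number of fixed points of π on X. -/
/-- For a tree-like multi-set `(π_1, …, π_n)` of permutations of a finite set `X` and any
two distinct indices `i ≠ j`, the permutations `π_i` and `π_j` have at least two fixed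
points between them. -/
theorem treeLike_two_fixed_points {n : ℕ} {X : Type*} [Fintype X] [DecidableEq X]
    (π : Fin n → Equiv.Perm X) (hT : TreeLikeFamily π)
    {i j : Fin n} (hij : i ≠ j) :
    2 ≤ fixCard (π i) + fixCard (π j) := by
  classical
  -- abbreviations
  set A : Fin n → ℕ := fun k => ∑ σ ∈ (π k).cycleFactorsFinset, σ.support.card with hA
  set B : Fin n → ℕ := fun k => ((π k).cycleFactorsFinset).card with hB
  -- X is nonempty
  have hXne : Nonempty X := by
    by_contra h
    have hVne : Nonempty (X ⊕ {p : Fin n × Equiv.Perm X // p.2 ∈ (π p.1).cycleFactorsFinset}) := hT.isConnected.nonempty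
    rcases hVne with ⟨v⟩
    rcases v with x | c
    · exact h ⟨x⟩
    · have hc := (Equiv.Perm.mem_cycleFactorsFinset_iff.mp c.2).1.two_le_card_support
      have : c.1.2.support.card ≤ Fintype.card X := Finset.card_le_card (Finset.subset_univ _)
      have hc0 : Fintype.card X = 0 := Fintype.card_eq_zero_iff.mpr ⟨fun x => h ⟨x⟩⟩
      omega
  have hm1 : 1 ≤ Fintype.card X := Fintype.card_pos
  -- sums over the subtype equal double sums
  have hsum : ∀ (g : Fin n × Equiv.Perm X → ℕ),
      ∑ c : {p : Fin n × Equiv.Perm X // p.2 ∈ (π p.1).cycleFactorsFinset}, g c.1 = ∑ k : Fin n, ∑ σ ∈ (π k).cycleFactorsFinset, g (k, σ) := by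
    intro g
    rw [← Finset.sum_subtype (Finset.univ.filter fun p : Fin n × Equiv.Perm X =>
        p.2 ∈ (π p.1).cycleFactorsFinset) (by simp) g]
    rw [Finset.sum_filter, Fintype.sum_prod_type]
    refine Finset.sum_congr rfl fun k _ => ?_
    dsimp only
    rw [Finset.sum_ite_mem, Finset.univ_inter]
  -- tree edge count
  have hcard := hT.card_edgeFinset
  rw [Fintype.card_sum] at hcard
  -- card S = sum of B
  have hScard : Fintype.card {p : Fin n × Equiv.Perm X // p.2 ∈ (π p.1).cycleFactorsFinset} = ∑ k : Fin n, B k := by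
    have h := hsum (fun _ => 1)
    simp only [Finset.sum_const, smul_eq_mul, mul_one] at h
    rw [Finset.card_univ] at h
    exact h
  -- lower bound on edges
  have hEge : ∑ k : Fin n, A k ≤ (cycleGraph π).edgeFinset.card := by
    rw [← hsum (fun p => p.2.support.card)]
    rw [← Finset.card_sigma]
    apply Finset.card_le_card_of_injOn (fun q => s(Sum.inl q.2, Sum.inr q.1))
    · rintro ⟨c, x⟩ hq
      simp only [Finset.mem_coe, Finset.mem_sigma, Finset.mem_univ, true_and] at hq
      rw [Finset.mem_coe, SimpleGraph.mem_edgeFinset]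
      exact ⟨x, c, Equiv.Perm.mem_support.mp hq, Or.inl ⟨rfl, rfl⟩⟩
    · rintro ⟨c, x⟩ - ⟨c', x'⟩ - h
      simp only [Sym2.eq_iff] at h
      rcases h with ⟨h1, h2⟩ | ⟨h1, h2⟩
      · simp only [Sum.inl.injEq, Sum.inr.injEq] at h1 h2
        subst h1; subst h2; rfl
      · simp at h1
  -- A k + fixCard = Fintype.card X
  have hAfix : ∀ k, A k + fixCard (π k) = Fintype.card X := by
    intro k
    have h1 : (π k).cycleType.sum = (π k).support.card := Equiv.Perm.sum_cycleType _
    have h2 : (π k).cycleType.sum = A k := by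
      rw [Equiv.Perm.cycleType_def, hA]
      dsimp only
      rw [Finset.sum_eq_multiset_sum]
      rfl
    have h3 : (π k).support.card + fixCard (π k) = Fintype.card X := by
      have h4 := Finset.card_filter_add_card_filter_not
        (s := (Finset.univ : Finset X)) (p := fun x => (π k) x = x)
      have h5 : (π k).support.card
          = (Finset.univ.filter fun x => ¬ (π k) x = x).card := by
        congr 1
      rw [fixCard, ← Finset.card_univ, h5]
      omega
    omega
  -- 2 B k ≤ A k
  have hBA : ∀ k, 2 * B k ≤ A k := by
    intro k
    have := Finset.card_nsmul_le_sum ((π k).cycleFactorsFinset)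
      (fun σ => σ.support.card) 2
      (fun σ hσ => (Equiv.Perm.mem_cycleFactorsFinset_iff.mp hσ).1.two_le_card_support)
    simpa [mul_comm, smul_eq_mul] using this
  -- key inequality from tree
  have hkey : ∑ k : Fin n, A k + 1 ≤ Fintype.card X + ∑ k : Fin n, B k := by
    rw [← hScard]
    simp only [Fintype.card_eq_nat_card] at hcard ⊢
    omega
  -- D k = A k - B k
  have hD : ∀ k, B k ≤ A k := fun k => le_trans (by omega) (hBA k)
  have hsub : ∑ k : Fin n, (A k - B k) = ∑ k, A k - ∑ k, B k := by
    rw [eq_comm]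
    apply Nat.sub_eq_of_eq_add
    rw [← Finset.sum_add_distrib]
    exact Finset.sum_congr rfl fun k _ => (Nat.sub_add_cancel (hD k)).symm
  have hpair : (A i - B i) + (A j - B j) ≤ ∑ k : Fin n, (A k - B k) := by
    have hsubset : ∑ k ∈ ({i, j} : Finset (Fin n)), (A k - B k)
        ≤ ∑ k : Fin n, (A k - B k) :=
      Finset.sum_le_sum_of_subset (Finset.subset_univ _)
    rwa [Finset.sum_pair hij] at hsubset
  have hfi : fixCard (π i) ≤ Fintype.card X := by have := hAfix i; omega
  have hfj : fixCard (π j) ≤ Fintype.card X := by have := hAfix j; omega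
  have h2i := hBA i; have h2j := hBA j
  have hi := hAfix i; have hj := hAfix j
  have hBsum : ∑ k : Fin n, B k ≤ ∑ k : Fin n, A k := Finset.sum_le_sum fun k _ => hD k
  omega
end

section
/- Let f ∈ ℂ[z] be an exceptional polynomial of degree d ≥ 2 with exceptional set Σ = {z_0, z_1}, where z_0 ≠ z_1. Then one of the following holds: (1) f(z_0) = z_0, f(z_1) = z_1, d is odd, and f is linearly conjugate to T_d; (2) f(z_0) = z_1, f(z_1) = z_0, d is odd, and f is linearly conjugate to −T_d; (3) f(z_0) = f(z_1) ∈ {z_0, z_1}, d is even, and f is linearly conjugate to T_d. -/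
/-- Two polynomials are linearly conjugate: `f = L ∘ g ∘ L⁻¹` for some affine map
`L(z) = az + b`, `a ≠ 0`; equivalently `f ∘ L = L ∘ g`. -/
def LinConj (f g : Polynomial ℂ) : Prop :=
  ∃ a b : ℂ, a ≠ 0 ∧
    f.comp (Polynomial.C a * Polynomial.X + Polynomial.C b) =
      (Polynomial.C a * Polynomial.X + Polynomial.C b).comp g

open Polynomial Polynomial.Chebyshev

lemma T_natCast_add_two (n : ℕ) :
    T ℂ ((n : ℤ) + 2) = 2 * X * T ℂ ((n : ℤ) + 1) - T ℂ (n : ℤ) := T_add_two ℂ n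

lemma T_deg_coeff : ∀ n : ℕ, (T ℂ n).natDegree ≤ n ∧ (T ℂ n).coeff n = 2 ^ (n - 1) := by
  have key : ∀ n : ℕ,
      ((T ℂ n).natDegree ≤ n ∧ (T ℂ n).coeff n = 2 ^ (n - 1)) ∧
      ((T ℂ (n+1)).natDegree ≤ n+1 ∧ (T ℂ (n+1)).coeff (n+1) = 2 ^ n) := by
    intro n
    induction n with
    | zero => simp [T_zero, T_one]
    | succ k ih =>
      obtain ⟨⟨hd0, hc0⟩, hd1, hc1⟩ := ih
      have hrec : T ℂ ((k : ℤ) + 2) = 2 * X * T ℂ ((k : ℤ) + 1) - T ℂ (k : ℤ) :=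
        T_add_two ℂ k
      have hcast : ((k : ℤ) + 2) = ((k + 2 : ℕ) : ℤ) := by push_cast; ring
      have hcast1 : ((k : ℤ) + 1) = ((k + 1 : ℕ) : ℤ) := by push_cast; ring
      refine ⟨⟨hd1, hc1⟩, ?_, ?_⟩
      · push_cast
        rw [show ((k:ℤ) + 1 + 1) = (k:ℤ) + 2 by ring, hrec]
        refine (natDegree_sub_le _ _).trans (max_le ?_ (hd0.trans (by omega)))
        calc (2 * X * T ℂ ((k:ℤ)+1)).natDegree ≤ (2 * X : ℂ[X]).natDegree + (T ℂ ((k:ℤ)+1)).natDegree :=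
              natDegree_mul_le
          _ ≤ 1 + (k+1) := by
              gcongr
              · exact (natDegree_C_mul_le 2 X).trans (by simp)
          _ = k + 2 := by ring
      · push_cast
        rw [show ((k:ℤ) + 1 + 1) = (k:ℤ) + 2 by ring, hrec]
        have h2X : (2 * X * T ℂ ((k:ℤ)+1)) = C 2 * (X * T ℂ ((k:ℤ)+1)) := by
          have h2 : (2:ℂ[X]) = C 2 := (map_ofNat Polynomial.C 2).symm
          rw [h2]; ring
        rw [coeff_sub, h2X, coeff_C_mul, coeff_X_mul]
        rw [hc1, coeff_eq_zero_of_natDegree_lt (lt_of_le_of_lt hd0 (by omega))]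
        ring
  intro n; exact (key n).1

lemma T_eval_one : ∀ n : ℤ, (T ℂ n).eval 1 = 1 := by
  intro n
  induction n using Polynomial.Chebyshev.induct with
  | zero => simp
  | one => simp
  | add_two k ih1 ih2 => rw [T_add_two]; simp [ih1, ih2]; norm_num
  | neg_add_one k ih1 ih2 =>
      have h : ((-k : ℤ) - 1) = (-k + 1) - 2 := by ring
      rw [T_neg] at ih1
      rw [h, T_sub_two]; simp [T_neg, ih1, ih2]; norm_num

lemma T_comp_neg_X : ∀ n : ℕ, (T ℂ n).comp (-X) = C ((-1 : ℂ) ^ n) * T ℂ n := by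
  have key : ∀ n : ℕ,
      ((T ℂ n).comp (-X) = C ((-1:ℂ)^n) * T ℂ n) ∧
      ((T ℂ (n+1)).comp (-X) = C ((-1:ℂ)^(n+1)) * T ℂ (n+1)) := by
    intro n
    induction n with
    | zero => simp [T_zero, T_one]
    | succ k ih =>
      obtain ⟨h0, h1⟩ := ih
      have hrec := T_add_two ℂ (k : ℤ)
      refine ⟨h1, ?_⟩
      push_cast
      rw [show ((k:ℤ) + 1 + 1) = (k:ℤ) + 2 by ring, hrec]
      simp only [sub_comp, mul_comp, ofNat_comp, X_comp, h0, h1]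
      rw [show ((-1:ℂ))^(k+2) = (-1)^k by ring, show ((-1:ℂ))^(k+1) = -(-1)^k by ring]
      simp only [map_neg, map_pow]
      ring
  intro n; exact (key n).1

lemma T_eval_neg_one (n : ℕ) : (T ℂ n).eval (-1) = (-1 : ℂ) ^ n := by
  have h := congrArg (Polynomial.eval (1 : ℂ)) (T_comp_neg_X n)
  rw [eval_comp] at h
  simp [_root_.T_eval_one] at h
  simpa [_root_.T_eval_one] using h


lemma T_ode (n : ℤ) :
    X * derivative (T ℂ n) + (X ^ 2 - 1) * derivative (derivative (T ℂ n))
      = (n : ℂ[X]) ^ 2 * T ℂ n := by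
  have H := one_sub_X_sq_mul_derivative_T_eq_poly_in_T (R := ℂ) (n - 1)
  rw [sub_add_cancel] at H
  have h1 := congrArg derivative H
  simp only [derivative_mul, derivative_sub, derivative_one, derivative_X,
    derivative_X_pow, derivative_add, derivative_intCast, zero_add, zero_mul,
    add_zero, zero_sub, mul_one, Nat.cast_ofNat, map_ofNat] at h1
  have h2 := T_derivative_eq_U (R := ℂ) n
  have h3 := T_derivative_eq_U (R := ℂ) (n - 1)
  have h4 := T_eq_U_sub_X_mul_U (R := ℂ) n
  have h5 := U_eq ℂ n
  linear_combination (norm := (push_cast; ring_nf))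
    (-1 : ℂ[X]) * h1 + ((n : ℂ[X]) - 1) * X * h2 + (-(n : ℂ[X])) * h3
      + (-(n : ℂ[X]) * ((n : ℂ[X]) - 1)) * h4 + (-(n : ℂ[X]) * ((n : ℂ[X]) - 1)) * h5


lemma ode_coeff (d : ℕ) (y : ℂ[X])
    (hode : X * derivative y + (X ^ 2 - 1) * derivative (derivative y)
      = C ((d : ℂ) ^ 2) * y) (m : ℕ) :
    ((m : ℂ) ^ 2 - (d : ℂ) ^ 2) * y.coeff m
      = ((m : ℂ) + 1) * ((m : ℂ) + 2) * y.coeff (m + 2) := by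
  have hXq : ∀ p : ℂ[X], X ^ 2 * p = X * (X * p) := by intro p; ring
  have h := congrArg (fun p : ℂ[X] => p.coeff m) hode
  simp only [coeff_add, coeff_sub, sub_mul, one_mul, coeff_C_mul, hXq] at h
  match m with
  | 0 =>
    simp only [mul_coeff_zero, coeff_X_zero, zero_mul, coeff_derivative] at h
    push_cast at h ⊢
    linear_combination h
  | 1 =>
    rw [show (1:ℕ) = 0 + 1 by rfl] at h
    simp only [coeff_X_mul, mul_coeff_zero, coeff_X_zero, zero_mul,
      coeff_derivative] at h
    push_cast at h ⊢
    linear_combination h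
  | (k+2) =>
    rw [show (k+2:ℕ) = (k+1) + 1 by rfl] at h
    simp only [coeff_X_mul, coeff_derivative] at h
    rw [show (k+1:ℕ) = k + 1 by rfl, show (k:ℕ) + 1 + 1 = k + 2 by rfl] at h
    push_cast at h ⊢
    linear_combination h

lemma ode_unique (d : ℕ) (hd : 1 ≤ d) (y : ℂ[X]) (hy : y.natDegree ≤ d)
    (hode : X * derivative y + (X ^ 2 - 1) * derivative (derivative y)
      = C ((d : ℂ) ^ 2) * y) (htop : y.coeff d = 0) : y = 0 := by
  have key : ∀ i : ℕ, ∀ m : ℕ, d = m + i → y.coeff m = 0 := by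
    intro i
    induction i using Nat.strong_induction_on with
    | _ i ih =>
      intro m hm
      rcases Nat.eq_zero_or_pos i with hi | hi
      · have hmd : m = d := by omega
        rw [hmd]; exact htop
      · have hrec := ode_coeff d y hode m
        have hc2 : y.coeff (m + 2) = 0 := by
          rcases le_or_gt (m + 2) d with h2 | h2
          · exact ih (i - 2) (by omega) (m + 2) (by omega)
          · exact coeff_eq_zero_of_natDegree_lt (lt_of_le_of_lt hy h2)
        rw [hc2, mul_zero] at hrec
        have hne : ((m : ℂ) ^ 2 - (d : ℂ) ^ 2) ≠ 0 := by
          have hmd : m < d := by omega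
          intro hcon
          have : ((m : ℂ) - d) * ((m : ℂ) + d) = 0 := by ring_nf; linear_combination hcon
          rcases mul_eq_zero.mp this with h | h
          · have : (m : ℂ) = d := by linear_combination h
            exact absurd (Nat.cast_injective this) (by omega)
          · have : ((m + d : ℕ) : ℂ) = 0 := by push_cast; linear_combination h
            have := Nat.cast_eq_zero.mp this
            omega
        exact (mul_eq_zero.mp hrec).resolve_left hne
  ext n
  rcases le_or_gt n d with h | h
  · simpa using key (d - n) n (by omega)
  · simp [coeff_eq_zero_of_natDegree_lt (lt_of_le_of_lt hy h)]


lemma key_identity (f : ℂ[X]) (d : ℕ) (hd : 2 ≤ d) (hdeg : f.natDegree = d)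
    (z₀ z₁ : ℂ) (hz : z₀ ≠ z₁)
    (h₀ : f.eval z₀ = z₀ ∨ f.eval z₀ = z₁)
    (h₁ : f.eval z₁ = z₀ ∨ f.eval z₁ = z₁)
    (hd₀ : (derivative f).eval z₀ ≠ 0) (hd₁ : (derivative f).eval z₁ ≠ 0)
    (hcrit : ∀ z, z ≠ z₀ → z ≠ z₁ → f.eval z = z₀ ∨ f.eval z = z₁ →
      (derivative f).eval z = 0) :
    ∃ e : ℂ, e ≠ 0 ∧
      (f - C z₀) * (f - C z₁) = C e * ((X - C z₀) * (X - C z₁)) * derivative f ^ 2 := by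
  classical
  have hf0 : f ≠ 0 := fun h => by simp [h] at hdeg; omega
  have hf'0 : derivative f ≠ 0 := by
    intro h
    have := natDegree_eq_zero_of_derivative_eq_zero h
    omega
  have hfz : ∀ σ : ℂ, f - C σ ≠ 0 := by
    intro σ h
    have : f = C σ := by linear_combination h
    rw [this] at hdeg; simp at hdeg; omega
  set g : ℂ[X] := (f - C z₀) * (f - C z₁) with hgdef
  have hg0 : g ≠ 0 := mul_ne_zero (hfz z₀) (hfz z₁)
  have hgdeg : g.natDegree = 2 * d := by
    rw [hgdef, natDegree_mul (hfz z₀) (hfz z₁), natDegree_sub_C, natDegree_sub_C, hdeg]; ring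
  have hcardA : Multiset.card g.roots = 2 * d := by
    rw [splits_iff_card_roots.mp (IsAlgClosed.splits g)] ; exact hgdeg
  -- root multiplicity facts
  have hrm_mul : ∀ w : ℂ, rootMultiplicity w g
      = rootMultiplicity w (f - C z₀) + rootMultiplicity w (f - C z₁) :=
    fun w => rootMultiplicity_mul hg0
  have hrm_zero : ∀ (w σ : ℂ), f.eval w ≠ σ → rootMultiplicity w (f - C σ) = 0 := by
    intro w σ h
    exact rootMultiplicity_eq_zero (by simp [IsRoot, h, sub_eq_zero])
  have hrm_der : ∀ (w σ : ℂ), f.eval w = σ →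
      rootMultiplicity w (derivative f) = rootMultiplicity w (f - C σ) - 1 := by
    intro w σ h
    have := derivative_rootMultiplicity_of_root (p := f - C σ) (t := w)
      (by simp [IsRoot, h, sub_eq_zero])
    simpa using this
  have hrm_one : ∀ (w σ : ℂ), f.eval w = σ → (derivative f).eval w ≠ 0 →
      rootMultiplicity w (f - C σ) = 1 := by
    intro w σ h hder
    have h1 : 1 ≤ rootMultiplicity w (f - C σ) :=
      (rootMultiplicity_pos (hfz σ)).mpr (by simp [IsRoot, h, sub_eq_zero])
    have h2 : rootMultiplicity w (derivative f) = 0 :=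
      rootMultiplicity_eq_zero (by simp [IsRoot, hder])
    have := hrm_der w σ h
    omega
  -- counts of z₀ z₁ in g.roots
  have hcz : ∀ (u v : ℂ), u ≠ v → (f.eval u = u ∨ f.eval u = v) →
      (derivative f).eval u ≠ 0 → rootMultiplicity u ((f - C u) * (f - C v)) = 1 := by
    intro u v huv hu hdu
    rw [rootMultiplicity_mul (mul_ne_zero (hfz u) (hfz v))]
    rcases hu with h | h
    · rw [hrm_one u u h hdu, hrm_zero u v (by rw [h]; exact huv)]
    · rw [hrm_one u v h hdu, hrm_zero u u (by rw [h]; exact huv.symm)]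
  have hcz₀ : g.roots.count z₀ = 1 := by
    rw [count_roots]; exact hcz z₀ z₁ hz h₀ hd₀
  have hcz₁ : g.roots.count z₁ = 1 := by
    rw [count_roots, hgdef, mul_comm (f - C z₀) (f - C z₁)]
    rcases h₁ with h | h
    · rw [rootMultiplicity_mul (mul_ne_zero (hfz z₁) (hfz z₀)),
        hrm_one z₁ z₀ h hd₁, hrm_zero z₁ z₁ (by rw [h]; exact hz)]
    · rw [rootMultiplicity_mul (mul_ne_zero (hfz z₁) (hfz z₀)),
        hrm_one z₁ z₁ h hd₁, hrm_zero z₁ z₀ (by rw [h]; exact hz.symm)]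
  -- counts at other roots
  set B : Multiset ℂ := (derivative f).roots with hBdef
  have hother : ∀ w : ℂ, w ≠ z₀ → w ≠ z₁ → w ∈ g.roots →
      B.count w + 1 = g.roots.count w ∧ 1 ≤ B.count w := by
    intro w hw0 hw1 hw
    have hroot : g.eval w = 0 := (mem_roots hg0).mp hw
    have hfw : f.eval w = z₀ ∨ f.eval w = z₁ := by
      simpa [hgdef, sub_eq_zero] using hroot
    have hder0 : (derivative f).eval w = 0 := hcrit w hw0 hw1 hfw
    rcases hfw with h | h
    · have hone : 1 ≤ rootMultiplicity w (f - C z₀) :=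
        (rootMultiplicity_pos (hfz z₀)).mpr (by simp [IsRoot, h, sub_eq_zero])
      have hBpos : 1 ≤ rootMultiplicity w (derivative f) :=
        (rootMultiplicity_pos hf'0).mpr (by simp [IsRoot, hder0])
      have hder := hrm_der w z₀ h
      have h2 : rootMultiplicity w (f - C z₁) = 0 := hrm_zero w z₁ (by rw [h]; exact hz)
      constructor
      · rw [count_roots, count_roots, hrm_mul w, h2, hder]; omega
      · rw [count_roots]; exact hBpos
    · have hone : 1 ≤ rootMultiplicity w (f - C z₁) :=
        (rootMultiplicity_pos (hfz z₁)).mpr (by simp [IsRoot, h, sub_eq_zero])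
      have hBpos : 1 ≤ rootMultiplicity w (derivative f) :=
        (rootMultiplicity_pos hf'0).mpr (by simp [IsRoot, hder0])
      have hder := hrm_der w z₁ h
      have h2 : rootMultiplicity w (f - C z₀) = 0 := hrm_zero w z₀ (by rw [h]; exact hz.symm)
      constructor
      · rw [count_roots, count_roots, hrm_mul w, h2, hder]; omega
      · rw [count_roots]; exact hBpos
  -- Finset bookkeeping
  set F : Finset ℂ := g.roots.toFinset \ {z₀, z₁} with hFdef
  have hz₀A : z₀ ∈ g.roots.toFinset := by
    rw [Multiset.mem_toFinset, ← Multiset.count_pos, hcz₀]; norm_num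
  have hz₁A : z₁ ∈ g.roots.toFinset := by
    rw [Multiset.mem_toFinset, ← Multiset.count_pos, hcz₁]; norm_num
  have hsub : ({z₀, z₁} : Finset ℂ) ⊆ g.roots.toFinset := by
    intro w hw
    rcases Finset.mem_insert.mp hw with h | h
    · subst h; exact hz₀A
    · rw [Finset.mem_singleton.mp h]; exact hz₁A
  have hFmem : ∀ w ∈ F, w ≠ z₀ ∧ w ≠ z₁ ∧ w ∈ g.roots := by
    intro w hw
    rw [hFdef, Finset.mem_sdiff, Finset.mem_insert, Finset.mem_singleton,
      Multiset.mem_toFinset] at hw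
    push_neg at hw
    exact ⟨hw.2.1, hw.2.2, hw.1⟩
  have hsum : 2 * d = (∑ w ∈ F, g.roots.count w) + 2 := by
    have hunion : F ∪ ({z₀, z₁} : Finset ℂ) = g.roots.toFinset :=
      Finset.sdiff_union_of_subset hsub
    have hdisj : Disjoint F ({z₀, z₁} : Finset ℂ) := Finset.sdiff_disjoint
    have := Multiset.toFinset_sum_count_eq g.roots
    rw [← hunion, Finset.sum_union hdisj, Finset.sum_pair hz, hcz₀, hcz₁] at this
    omega
  have hB_le : Multiset.card B ≤ d - 1 := by
    calc Multiset.card B ≤ (derivative f).natDegree := card_roots' _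
      _ ≤ f.natDegree - 1 := natDegree_derivative_le f
      _ = d - 1 := by rw [hdeg]
  have hFsubB : F ⊆ B.toFinset := by
    intro w hw
    obtain ⟨h0, h1, hmem⟩ := hFmem w hw
    rw [Multiset.mem_toFinset, ← Multiset.count_pos]
    exact (hother w h0 h1 hmem).2
  have hS_le : (∑ w ∈ F, B.count w) ≤ Multiset.card B := by
    calc (∑ w ∈ F, B.count w) ≤ ∑ w ∈ B.toFinset, B.count w :=
          Finset.sum_le_sum_of_subset hFsubB
      _ = Multiset.card B := Multiset.toFinset_sum_count_eq B
  have hF_le : F.card ≤ ∑ w ∈ F, B.count w := by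
    calc F.card = ∑ w ∈ F, 1 := by simp
      _ ≤ ∑ w ∈ F, B.count w := Finset.sum_le_sum (fun w hw => by
          obtain ⟨h0, h1, hmem⟩ := hFmem w hw
          exact (hother w h0 h1 hmem).2)
  have hsum' : (∑ w ∈ F, g.roots.count w) = (∑ w ∈ F, B.count w) + F.card := by
    rw [Finset.card_eq_sum_ones, ← Finset.sum_add_distrib]
    apply Finset.sum_congr rfl
    intro w hw
    obtain ⟨h0, h1, hmem⟩ := hFmem w hw
    have := (hother w h0 h1 hmem).1
    omega
  -- equalities
  have hSeq : (∑ w ∈ F, B.count w) = d - 1 := by omega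
  have hFcard : F.card = d - 1 := by omega
  have hcount1 : ∀ w ∈ F, B.count w = 1 := by
    have h1le : ∀ w ∈ F, 1 ≤ B.count w := fun w hw => by
      obtain ⟨h0, h1, hmem⟩ := hFmem w hw
      exact (hother w h0 h1 hmem).2
    have hsum_eq : (∑ w ∈ F, 1) = ∑ w ∈ F, B.count w := by
      rw [hSeq]; simp [hFcard]
    intro w hw
    exact ((Finset.sum_eq_sum_iff_of_le h1le).mp hsum_eq w hw).symm
  have hBF : B.toFinset = F := by
    apply Finset.Subset.antisymm _ hFsubB
    by_contra hcon
    obtain ⟨w, hwB, hwF⟩ := Finset.not_subset.mp hcon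
    have : (∑ x ∈ F, B.count x) < ∑ x ∈ B.toFinset, B.count x :=
      Finset.sum_lt_sum_of_subset hFsubB hwB hwF
        (Multiset.count_pos.mpr (Multiset.mem_toFinset.mp hwB)) (fun _ _ _ => Nat.zero_le _)
    rw [Multiset.toFinset_sum_count_eq] at this
    omega
  -- multiset identity
  have hA_eq : g.roots = z₀ ::ₘ z₁ ::ₘ (2 • B) := by
    ext w
    rw [Multiset.count_cons, Multiset.count_cons, Multiset.count_nsmul]
    by_cases hw0 : w = z₀
    · subst hw0
      have hB0 : B.count w = 0 := by
        rw [Multiset.count_eq_zero]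
        intro hmem
        have : w ∈ F := hBF ▸ Multiset.mem_toFinset.mpr hmem
        exact (hFmem w this).1 rfl
      simp [hcz₀, hB0, hz.symm, hz]
    by_cases hw1 : w = z₁
    · subst hw1
      have hB0 : B.count w = 0 := by
        rw [Multiset.count_eq_zero]
        intro hmem
        have : w ∈ F := hBF ▸ Multiset.mem_toFinset.mpr hmem
        exact (hFmem w this).2.1 rfl
      simp [hcz₁, hB0, hw0]
    by_cases hwA : w ∈ g.roots
    · have hwF : w ∈ F := by
        rw [hFdef, Finset.mem_sdiff, Multiset.mem_toFinset]
        exact ⟨hwA, by simp [hw0, hw1]⟩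
      have := (hother w hw0 hw1 hwA).1
      rw [hcount1 w hwF] at this
      simp [hw0, hw1, ← this, hcount1 w hwF]
    · have hA0 : g.roots.count w = 0 := Multiset.count_eq_zero.mpr hwA
      have hB0 : B.count w = 0 := by
        rw [Multiset.count_eq_zero]
        intro hmem
        have hwF : w ∈ F := hBF ▸ Multiset.mem_toFinset.mpr hmem
        exact hwA (hFmem w hwF).2.2
      simp [hA0, hB0, hw0, hw1]
  -- the comparison polynomial
  set p : ℂ[X] := ((X - C z₀) * (X - C z₁)) * derivative f ^ 2 with hpdef
  have hp0 : p ≠ 0 := mul_ne_zero (mul_ne_zero (X_sub_C_ne_zero z₀) (X_sub_C_ne_zero z₁))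
    (pow_ne_zero 2 hf'0)
  have hproots : p.roots = z₀ ::ₘ z₁ ::ₘ (2 • B) := by
    rw [hpdef, roots_mul (mul_ne_zero (mul_ne_zero (X_sub_C_ne_zero z₀) (X_sub_C_ne_zero z₁))
      (pow_ne_zero 2 hf'0)), roots_mul (mul_ne_zero (X_sub_C_ne_zero z₀) (X_sub_C_ne_zero z₁)),
      roots_X_sub_C, roots_X_sub_C, roots_pow]
    rw [← hBdef, add_assoc, Multiset.singleton_add, Multiset.singleton_add]
  have hcardp : Multiset.card p.roots = 2 * d := by
    rw [hproots, ← hA_eq, hcardA]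
  have hpdeg : p.natDegree = 2 * d := by
    have hle : p.natDegree ≤ 2 * d := by
      calc p.natDegree ≤ ((X - C z₀) * (X - C z₁)).natDegree + (derivative f ^ 2).natDegree :=
            natDegree_mul_le
        _ ≤ 2 + 2 * (d - 1) := by
            gcongr
            · rw [natDegree_mul (X_sub_C_ne_zero z₀) (X_sub_C_ne_zero z₁),
                natDegree_X_sub_C, natDegree_X_sub_C]
            · calc (derivative f ^ 2).natDegree ≤ 2 * (derivative f).natDegree :=
                  natDegree_pow_le
                _ ≤ 2 * (d - 1) := by
                    have := natDegree_derivative_le f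
                    rw [hdeg] at this
                    omega
        _ ≤ 2 * d := by omega
    have hge : 2 * d ≤ p.natDegree := hcardp ▸ card_roots' p
    omega
  -- write both as leading coeff times product of roots
  have hgfact := C_leadingCoeff_mul_prod_multiset_X_sub_C (p := g) (by rw [hcardA, hgdeg])
  have hpfact := C_leadingCoeff_mul_prod_multiset_X_sub_C (p := p) (by rw [hcardp, hpdeg])
  have hplc : p.leadingCoeff ≠ 0 := leadingCoeff_ne_zero.mpr hp0
  have hglc : g.leadingCoeff ≠ 0 := leadingCoeff_ne_zero.mpr hg0
  have hroots_eq : g.roots = p.roots := by rw [hA_eq, hproots]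
  have h2 : (Multiset.map (fun a => X - C a) p.roots).prod = C p.leadingCoeff⁻¹ * p := by
    have h := congrArg (fun q => C p.leadingCoeff⁻¹ * q) hpfact
    rw [← mul_assoc, ← Polynomial.C_mul, inv_mul_cancel₀ hplc, C_1, one_mul] at h
    exact h
  have hfin : g = C (g.leadingCoeff * p.leadingCoeff⁻¹) * p := by
    conv_lhs => rw [← hgfact, hroots_eq, h2]
    rw [← mul_assoc, ← Polynomial.C_mul]
  refine ⟨g.leadingCoeff * p.leadingCoeff⁻¹, mul_ne_zero hglc (inv_ne_zero hplc), ?_⟩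
  calc (f - C z₀) * (f - C z₁) = g := hgdef.symm
    _ = C (g.leadingCoeff * p.leadingCoeff⁻¹) * p := hfin
    _ = C (g.leadingCoeff * p.leadingCoeff⁻¹) * ((X - C z₀) * (X - C z₁))
          * derivative f ^ 2 := by rw [hpdef]; ring

/-- Classification of exceptional polynomials with a two-point exceptional set
`Σ = {z₀, z₁}`: `f` is linearly conjugate to `±T_d`, in one of three ways according to
the action of `f` on `Σ` and the parity of `d`. -/
theorem exceptional_two_point_classification (f : Polynomial ℂ) (d : ℕ) (hd : 2 ≤ d)
    (hdeg : f.natDegree = d) (z₀ z₁ : ℂ) (hz : z₀ ≠ z₁)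
    (hexc : {z : ℂ | f.eval z ∈ ({z₀, z₁} : Set ℂ)} \
        {z : ℂ | (Polynomial.derivative f).eval z = 0} = {z₀, z₁}) :
    (f.eval z₀ = z₀ ∧ f.eval z₁ = z₁ ∧ Odd d ∧
      LinConj f (Polynomial.Chebyshev.T ℂ d)) ∨
    (f.eval z₀ = z₁ ∧ f.eval z₁ = z₀ ∧ Odd d ∧
      LinConj f (-Polynomial.Chebyshev.T ℂ d)) ∨
    (f.eval z₀ = f.eval z₁ ∧ (f.eval z₀ = z₀ ∨ f.eval z₀ = z₁) ∧ Even d ∧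
      LinConj f (Polynomial.Chebyshev.T ℂ d)) := by
  have hx : ∀ z : ℂ, ((f.eval z = z₀ ∨ f.eval z = z₁) ∧ ¬(derivative f).eval z = 0)
      ↔ (z = z₀ ∨ z = z₁) := by
    intro z
    have := Set.ext_iff.mp hexc z
    simpa [Set.mem_diff, Set.mem_setOf_eq, Set.mem_insert_iff, Set.mem_singleton_iff] using this
  have h₀ : f.eval z₀ = z₀ ∨ f.eval z₀ = z₁ := ((hx z₀).mpr (Or.inl rfl)).1
  have h₁ : f.eval z₁ = z₀ ∨ f.eval z₁ = z₁ := ((hx z₁).mpr (Or.inr rfl)).1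
  have hd₀ : (derivative f).eval z₀ ≠ 0 := ((hx z₀).mpr (Or.inl rfl)).2
  have hd₁ : (derivative f).eval z₁ ≠ 0 := ((hx z₁).mpr (Or.inr rfl)).2
  have hcrit : ∀ z, z ≠ z₀ → z ≠ z₁ → f.eval z = z₀ ∨ f.eval z = z₁ →
      (derivative f).eval z = 0 := by
    intro z hz0 hz1 hfz
    by_contra hder
    rcases (hx z).mp ⟨hfz, hder⟩ with h | h
    · exact hz0 h
    · exact hz1 h
  obtain ⟨e, he0, hid⟩ := key_identity f d hd hdeg z₀ z₁ hz h₀ h₁ hd₀ hd₁ hcrit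
  -- the affine change of variables
  set a : ℂ := (z₁ - z₀) / 2 with hadef
  set b : ℂ := (z₁ + z₀) / 2 with hbdef
  have ha : a ≠ 0 := by
    rw [hadef]
    exact div_ne_zero (sub_ne_zero.mpr hz.symm) two_ne_zero
  have hCa : (C a : ℂ[X]) ≠ 0 := fun h => ha (by simpa using h)
  set L : ℂ[X] := C a * X + C b with hLdef
  set h : ℂ[X] := C a⁻¹ * f.comp L - C (a⁻¹ * b) with hhdef
  clear_value h L b a
  have hLh : f.comp L = C a * h + C b := by
    rw [hhdef, mul_sub, ← mul_assoc, ← Polynomial.C_mul, mul_inv_cancel₀ ha, C_1, one_mul, ← Polynomial.C_mul]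
    have hab : a * (a⁻¹ * b) = b := by field_simp
    rw [hab]; ring
  have hhdeg : h.natDegree = d := by
    have hL1 : L.natDegree = 1 := by rw [hLdef]; exact natDegree_linear ha
    have hcomp : (f.comp L).natDegree = d := by rw [natDegree_comp, hL1, hdeg, mul_one]
    rw [hhdef, natDegree_sub_C, natDegree_C_mul (inv_ne_zero ha), hcomp]
  have hh0 : h ≠ 0 := fun hcon => by rw [hcon] at hhdeg; simp at hhdeg; omega
  have hc₀ : h.coeff d ≠ 0 := by
    have hlc : h.coeff d = h.leadingCoeff := by rw [← hhdeg]; rfl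
    rw [hlc]
    exact leadingCoeff_ne_zero.mpr hh0
  -- derivative of h
  have hder : derivative h = (derivative f).comp L := by
    have h1 : derivative (f.comp L) = C a * (derivative f).comp L := by
      rw [derivative_comp]
      congr 1
      rw [hLdef, derivative_add, derivative_C, add_zero, derivative_C_mul, derivative_X, mul_one]
    have h2 : derivative (f.comp L) = C a * derivative h := by
      rw [hLh, derivative_add, derivative_C_mul, derivative_C, add_zero]
    exact mul_left_cancel₀ hCa (h2.symm.trans h1)
  have hh'0 : derivative h ≠ 0 := by
    intro hcon
    have := natDegree_eq_zero_of_derivative_eq_zero hcon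
    omega
  have hh'lc : (derivative h).coeff (d - 1) = h.coeff d * d := by
    have hc := coeff_derivative h (d - 1)
    rw [show d - 1 + 1 = d by omega] at hc
    rw [hc, Nat.cast_sub (show 1 ≤ d by omega)]
    push_cast
    ring
  have hh'deg : (derivative h).natDegree = d - 1 := by
    have hle := natDegree_derivative_le h
    rw [hhdeg] at hle
    have hne : (derivative h).coeff (d - 1) ≠ 0 := by
      rw [hh'lc]
      exact mul_ne_zero hc₀ (Nat.cast_ne_zero.mpr (by omega))
    exact le_antisymm hle (le_natDegree_of_ne_zero hne)
  -- compose identity with L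
  have Hc := congrArg (fun q : ℂ[X] => q.comp L) hid
  simp only [mul_comp, sub_comp, C_comp, X_comp, pow_comp] at Hc
  rw [hLh, ← hder] at Hc
  rw [hLdef] at Hc
  have hb0 : C b - C z₀ = C a := by
    rw [← C_sub]; congr 1; rw [hadef, hbdef]; ring
  have hb1 : C b - C z₁ = -C a := by
    rw [← C_sub, ← Polynomial.C_neg]; congr 1; rw [hadef, hbdef]; ring
  simp only [add_sub_assoc, hb0, hb1] at Hc
  have hq : (h + 1) * (h - 1) = C e * ((X + 1) * (X - 1)) * derivative h ^ 2 := by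
    apply mul_left_cancel₀ (mul_ne_zero hCa hCa)
    linear_combination Hc
  -- compare top coefficients to get e * d^2 = 1
  have hed : e * (d : ℂ) ^ 2 = 1 := by
    have hcl : ((h + 1) * (h - 1)).coeff (2 * d) = h.coeff d * h.coeff d := by
      have hexp : (h + 1) * (h - 1) = h * h - 1 := by ring
      rw [hexp, coeff_sub, coeff_one]
      have hmul := coeff_mul_degree_add_degree h h
      have hlc2 : h.leadingCoeff = h.coeff d := by rw [← hhdeg]; rfl
      rw [hhdeg, hlc2] at hmul
      rw [show 2 * d = d + d by ring, hmul]
      have : ¬ (d + d = 0) := by omega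
      simp [this]; omega
    have hcr : (C e * ((X + 1) * (X - 1)) * derivative h ^ 2).coeff (2 * d)
        = e * (h.coeff d * d * (h.coeff d * d)) := by
      have hexp : C e * ((X + 1) * (X - 1)) * derivative h ^ 2
          = C e * (X ^ 2 * (derivative h * derivative h)) - C e * (derivative h * derivative h) := by
        ring
      rw [hexp, coeff_sub, coeff_C_mul, coeff_C_mul]
      have hdd := coeff_mul_degree_add_degree (derivative h) (derivative h)
      have hlc3 : (derivative h).leadingCoeff = (derivative h).coeff (d - 1) := by
        rw [← hh'deg]; rfl
      rw [hh'deg, hlc3, hh'lc] at hdd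
      have h1 : (X ^ 2 * (derivative h * derivative h)).coeff (2 * d)
          = (derivative h * derivative h).coeff (2 * d - 2) := by
        have := coeff_X_pow_mul (derivative h * derivative h) 2 (2 * d - 2)
        rw [show 2 * d - 2 + 2 = 2 * d by omega] at this
        exact this
      have h2 : (derivative h * derivative h).coeff (2 * d - 2) = h.coeff d * d * (h.coeff d * d) := by
        rw [show 2 * d - 2 = (d - 1) + (d - 1) by omega, hdd]
      have h3 : (derivative h * derivative h).coeff (2 * d) = 0 := by
        apply coeff_eq_zero_of_natDegree_lt
        have := natDegree_mul hh'0 hh'0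
        rw [hh'deg] at this
        rw [this]; omega
      rw [h1, h2, h3, mul_zero, sub_zero]
    have hco := congrArg (fun q : ℂ[X] => q.coeff (2 * d)) hq
    simp only [hcl, hcr] at hco
    have hcc : h.coeff d * h.coeff d ≠ 0 := mul_ne_zero hc₀ hc₀
    have h2 : (h.coeff d * h.coeff d) * (e * (d : ℂ) ^ 2) = (h.coeff d * h.coeff d) * 1 := by
      rw [mul_one]; linear_combination -hco
    exact mul_left_cancel₀ hcc h2
  -- normalized quadratic identity
  have hq' : C ((d : ℂ) ^ 2) * (h ^ 2 - 1) = (X ^ 2 - 1) * derivative h ^ 2 := by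
    have hce : C e * C ((d : ℂ) ^ 2) = 1 := by
      rw [← Polynomial.C_mul, hed, C_1]
    linear_combination C ((d : ℂ) ^ 2) * hq + ((X ^ 2 - 1) * derivative h ^ 2) * hce
  -- the differential equation
  have hode : X * derivative h + (X ^ 2 - 1) * derivative (derivative h)
      = C ((d : ℂ) ^ 2) * h := by
    apply mul_left_cancel₀ (mul_ne_zero (show (2 : ℂ[X]) ≠ 0 by
      intro hcon
      have := congrArg (fun q : ℂ[X] => q.coeff 0) hcon
      simp at this) hh'0)
    have DE := congrArg derivative hq'
    simp only [derivative_mul, derivative_sub, derivative_one, derivative_C,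
      derivative_X_pow, derivative_pow, derivative_X, zero_mul, zero_add, add_zero,
      sub_zero, zero_sub, mul_one, Nat.cast_ofNat, map_ofNat] at DE
    norm_num at DE
    simp only [map_pow, C_eq_natCast] at DE ⊢
    linear_combination -DE
  -- T side
  have hTdeg : (T ℂ d).natDegree ≤ d := (T_deg_coeff d).1
  have hTcoeff : (T ℂ d).coeff d = 2 ^ (d - 1) := (T_deg_coeff d).2
  have hodeT : X * derivative (T ℂ d) + (X ^ 2 - 1) * derivative (derivative (T ℂ d))
      = C ((d : ℂ) ^ 2) * T ℂ d := by
    have := T_ode (d : ℤ)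
    have hcast : ((d : ℤ) : ℂ[X]) = C (d : ℂ) := by push_cast; simp [C_eq_natCast]
    rw [hcast] at this
    rw [this, ← C_pow]
  set c : ℂ := h.coeff d / (2 ^ (d - 1) : ℂ) with hcdef
  have h2pow : (2 : ℂ) ^ (d - 1) ≠ 0 := pow_ne_zero _ two_ne_zero
  have hy : h - C c * T ℂ d = 0 := by
    apply ode_unique d (by omega)
    · refine (natDegree_sub_le _ _).trans (max_le (le_of_eq hhdeg) ?_)
      exact (natDegree_C_mul_le _ _).trans hTdeg
    · simp only [derivative_sub, derivative_C_mul]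
      linear_combination hode - C c * hodeT
    · rw [coeff_sub, coeff_C_mul, hTcoeff, hcdef]
      field_simp; ring
  have hhc : h = C c * T ℂ d := by
    have := sub_eq_zero.mp hy
    exact this
  -- c^2 = 1
  have heval1 : h.eval 1 = c := by
    rw [hhc]; simp [_root_.T_eval_one]
  have hc2 : c ^ 2 = 1 := by
    have := congrArg (Polynomial.eval 1) hq'
    simp only [eval_mul, eval_sub, eval_pow, eval_one, eval_X, eval_C, heval1] at this
    have hd2 : ((d : ℂ) ^ 2) ≠ 0 := pow_ne_zero _ (Nat.cast_ne_zero.mpr (by omega))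
    have h11 : (1 : ℂ) ^ 2 - 1 = 0 := by norm_num
    rw [h11, zero_mul] at this
    have := mul_eq_zero.mp this
    rcases this with hcon | hgood
    · exact absurd hcon hd2
    · linear_combination hgood
  have hcor : c = 1 ∨ c = -1 := by
    have : (c - 1) * (c + 1) = 0 := by linear_combination hc2
    rcases mul_eq_zero.mp this with h | h
    · left; linear_combination h
    · right; linear_combination h
  -- eval computations
  have hevalm1 : h.eval (-1) = c * (-1) ^ d := by
    rw [hhc]; simp [_root_.T_eval_neg_one]
  have hLz₁ : L.eval 1 = z₁ := by
    rw [hLdef]; simp [hadef, hbdef]; ring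
  have hLz₀ : L.eval (-1) = z₀ := by
    rw [hLdef]; simp [hadef, hbdef]; ring
  have hfz₁ : f.eval z₁ = a * c + b := by
    have := congrArg (Polynomial.eval 1) hLh
    rw [eval_comp, hLz₁] at this
    simpa [heval1] using this
  have hfz₀ : f.eval z₀ = a * (c * (-1) ^ d) + b := by
    have := congrArg (Polynomial.eval (-1)) hLh
    rw [eval_comp, hLz₀] at this
    simpa [hevalm1] using this
  have hab₁ : a + b = z₁ := by rw [hadef, hbdef]; ring
  have hab₀ : -a + b = z₀ := by rw [hadef, hbdef]; ring
  -- case analysis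
  have hconj1 : f.comp (C a * X + C b) = (C a * X + C b).comp (C c * T ℂ (d : ℤ)) := by
    rw [← hLdef, hLh, hhc, hLdef]
    simp only [add_comp, mul_comp, C_comp, X_comp]
  rcases Nat.even_or_odd d with hev | hodd
  · -- d even: third case
    right; right
    have hm1 : ((-1 : ℂ)) ^ d = 1 := hev.neg_one_pow
    have hfz₀' : f.eval z₀ = a * c + b := by rw [hfz₀, hm1]; ring
    refine ⟨by rw [hfz₀', hfz₁], ?_, hev, ?_⟩
    · rcases hcor with hc | hc
      · right; rw [hfz₀', hc]; rw [mul_one]; exact hab₁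
      · left; rw [hfz₀', hc]; rw [← hab₀]; ring
    · rcases hcor with hc | hc
      · refine ⟨a, b, ha, ?_⟩
        rw [hconj1, hc, C_1, one_mul]
      · refine ⟨-a, b, neg_ne_zero.mpr ha, ?_⟩
        have hTn : (T ℂ (d : ℤ)).comp (-X) = T ℂ (d : ℤ) := by
          rw [T_comp_neg_X d, hm1, C_1, one_mul]
        have hM : C (-a) * X + C b = (C a * X + C b).comp (-X) := by
          simp only [add_comp, mul_comp, C_comp, X_comp, map_neg]; ring
        rw [hM, ← comp_assoc, hconj1, comp_assoc, comp_assoc]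
        congr 1
        rw [hc]
        simp only [mul_comp, C_comp, neg_comp, X_comp, map_neg, C_1, one_comp]
        rw [hTn]
        ring
  · -- d odd
    have hm1 : ((-1 : ℂ)) ^ d = -1 := hodd.neg_one_pow
    rcases hcor with hc | hc
    · left
      have hfz₀' : f.eval z₀ = z₀ := by rw [hfz₀, hm1, hc, ← hab₀]; ring
      have hfz₁' : f.eval z₁ = z₁ := by rw [hfz₁, hc, ← hab₁]; ring
      refine ⟨hfz₀', hfz₁', hodd, a, b, ha, ?_⟩
      rw [hconj1, hc, C_1, one_mul]
    · right; left
      have hfz₀' : f.eval z₀ = z₁ := by rw [hfz₀, hm1, hc, ← hab₁]; ring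
      have hfz₁' : f.eval z₁ = z₀ := by rw [hfz₁, hc, ← hab₀]; ring
      refine ⟨hfz₀', hfz₁', hodd, a, b, ha, ?_⟩
      rw [hconj1, hc]
      simp only [add_comp, mul_comp, C_comp, X_comp, neg_comp, map_neg, C_1]
      ring
end

section
/- Let f ∈ ℂ[z] be a polynomial of degree d ≥ 2 and let Σ ⊂ ℂ be a finite non-empty set with f^{−1}(Σ) ∖ Crit(f) = Σ, where Crit(f) is the set of zeros of f′. Then #Σ ≤ 2. -/
open Polynomial Finset

/-- If `f ∈ ℂ[z]` has degree at least 2 and `E ⊆ ℂ` is a finite non-empty set with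
`f⁻¹(E) \ Crit(f) = E`, then `E` has at most two elements. -/
theorem exceptional_set_card_le_two (f : Polynomial ℂ) (hdeg : 2 ≤ f.natDegree)
    (E : Set ℂ) (hfin : E.Finite) (hne : E.Nonempty)
    (hexc : {z : ℂ | f.eval z ∈ E} \ {z : ℂ | (Polynomial.derivative f).eval z = 0} = E) :
    E.ncard ≤ 2 := by
  classical
  set d := f.natDegree with hd
  set S : Finset ℂ := hfin.toFinset with hS
  set g : ℂ → ℂ[X] := fun σ => f - C σ with hg
  have hgdeg : ∀ σ, (g σ).natDegree = d := fun σ => natDegree_sub_C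
  have hgne : ∀ σ, g σ ≠ 0 := by
    intro σ h
    rw [← hgdeg σ, h, natDegree_zero] at hdeg; omega
  have hf' : derivative f ≠ 0 := by
    intro h
    have := natDegree_eq_zero_of_derivative_eq_zero h
    omega
  -- root finsets of the fibers
  set tf : ℂ → Finset ℂ := fun σ => (g σ).roots.toFinset with htf
  have hmem : ∀ σ z, z ∈ tf σ ↔ f.eval z = σ := by
    intro σ z
    rw [htf]
    simp only [Multiset.mem_toFinset]
    rw [mem_roots (hgne σ)]
    simp only [IsRoot, hg, eval_sub, eval_C,
      sub_eq_zero]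
  -- counting roots with multiplicity
  have hcard : ∀ σ, Multiset.card (g σ).roots = d := by
    intro σ
    rw [← hgdeg σ]
    exact splits_iff_card_roots.mp (IsAlgClosed.splits (g σ))
  have key : ∀ σ, (tf σ).card + ∑ z ∈ tf σ, (derivative f).rootMultiplicity z = d := by
    intro σ
    have h1 : ∑ z ∈ tf σ, (g σ).roots.count z = d := by
      rw [htf, Multiset.toFinset_sum_count_eq, hcard]
    rw [← h1, card_eq_sum_ones, ← Finset.sum_add_distrib]
    refine Finset.sum_congr rfl fun z hz => ?_
    have hroot : (g σ).IsRoot z := by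
      have := (hmem σ z).mp hz
      simp [hg, IsRoot, this]
    have hder : derivative (g σ) = derivative f := by simp [hg]
    rw [count_roots, ← hder, derivative_rootMultiplicity_of_root hroot]
    have hpos : 1 ≤ (g σ).rootMultiplicity z := (rootMultiplicity_pos (hgne σ)).mpr hroot
    omega
  -- disjointness of fibers
  have hdisj : (S : Set ℂ).PairwiseDisjoint tf := by
    intro σ _ τ _ hst
    simp only [Finset.disjoint_left]
    intro z hzs hzt
    exact hst (((hmem σ z).mp hzs).symm.trans ((hmem τ z).mp hzt))
  set U : Finset ℂ := S.biUnion tf with hU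
  have hUcard : U.card = ∑ σ ∈ S, (tf σ).card := Finset.card_biUnion hdisj
  -- the critical points
  set crits : Finset ℂ := (derivative f).roots.toFinset with hcrits
  have hcrits_card : crits.card ≤ d - 1 := by
    calc crits.card ≤ Multiset.card (derivative f).roots := Multiset.toFinset_card_le _
    _ ≤ (derivative f).natDegree := card_roots' _
    _ ≤ d - 1 := natDegree_derivative_le f
  -- total multiplicity bound
  have hmultsum : ∑ σ ∈ S, ∑ z ∈ tf σ, (derivative f).rootMultiplicity z ≤ d - 1 := by
    rw [← Finset.sum_biUnion hdisj]
    calc ∑ z ∈ U, (derivative f).rootMultiplicity z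
        = ∑ z ∈ U, (derivative f).roots.count z := by
          refine Finset.sum_congr rfl fun z _ => (count_roots _).symm
      _ = ∑ z ∈ U ∩ crits, (derivative f).roots.count z := by
          refine (Finset.sum_subset Finset.inter_subset_left fun z _ hz => ?_).symm
          rw [Multiset.count_eq_zero]
          intro hmem'
          exact hz (Finset.mem_inter.mpr ⟨‹z ∈ U›, Multiset.mem_toFinset.mpr hmem'⟩)
      _ ≤ ∑ z ∈ crits, (derivative f).roots.count z :=
          Finset.sum_le_sum_of_subset Finset.inter_subset_right
      _ = Multiset.card (derivative f).roots := by
          rw [hcrits, Multiset.toFinset_sum_count_eq]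
      _ ≤ (derivative f).natDegree := card_roots' _
      _ ≤ d - 1 := natDegree_derivative_le f
  -- U ⊆ S ∪ crits
  have hUsub : U ⊆ S ∪ crits := by
    intro z hz
    obtain ⟨σ, hσ, hzσ⟩ := Finset.mem_biUnion.mp hz
    have heval : f.eval z ∈ E := by
      rw [(hmem σ z).mp hzσ]; exact (hfin.mem_toFinset).mp hσ
    by_cases hc : (derivative f).eval z = 0
    · refine Finset.mem_union_right _ ?_
      rw [hcrits, Multiset.mem_toFinset, mem_roots hf']
      exact hc
    · refine Finset.mem_union_left _ ?_
      rw [hS, hfin.mem_toFinset, ← hexc]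
      exact ⟨heval, hc⟩
  have hUcard_le : U.card ≤ S.card + (d - 1) :=
    le_trans (Finset.card_le_card hUsub)
      (le_trans (Finset.card_union_le _ _) (by omega))
  -- combine
  set n := S.card with hn
  have hsum : ∑ σ ∈ S, ((tf σ).card + ∑ z ∈ tf σ, (derivative f).rootMultiplicity z) = n * d := by
    rw [Finset.sum_congr rfl fun σ _ => key σ, Finset.sum_const, smul_eq_mul]
  rw [Finset.sum_add_distrib] at hsum
  have hnd : n * d ≤ n + 2 * (d - 1) := by omega
  have hEn : E.ncard = n := by rw [hn, hS, Set.ncard_eq_toFinset_card E hfin]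
  rw [hEn]
  have hmul : n * d = n * (d - 1) + n := by
    obtain ⟨e, he⟩ : ∃ e, d = e + 1 := ⟨d - 1, by omega⟩
    rw [he]; simp [Nat.mul_succ]
  have h1 : n * (d - 1) ≤ 2 * (d - 1) := by omega
  exact Nat.le_of_mul_le_mul_right h1 (by omega)
end
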